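/- arXiv:0906.2614 — 7 statements merged into one kernel-verified Lean document; each statement's English description precedes it below -/
import Mathlib

section
/- Wald's theorem: For every countable family S of selection rules and every real p with 0 < p < 1, the set of sequences ω : ℕ → Bool that have limit frequency p and satisfy requirement II for every selection rule in S with limit p has the cardinality of the continuum (2^ℵ₀). -/
open Filter MeasureTheory Set
open scoped ENNReal

/-- The first `n` bits of `ω`, i.e. the list `[ω 0, …, ω (n-1)]`. -/
def prefixFn (ω : ℕ → Bool) (n : ℕ) : List Bool := List.ofFn fun i : Fin n => ω i

/-- `α` has limit frequency `p`: the fraction of `true`s among the first `N` terms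
tends to `p` as `N → ∞`. -/
def LimitFreq (α : ℕ → Bool) (p : ℝ) : Prop :=
  Tendsto (fun N => (((Finset.range N).filter fun i => α i = true).card : ℝ) / N)
    atTop (nhds p)

/-- The set of indices `i` such that the selection rule `s` selects the term `ω i`. -/
def SelectedIndices (s : List Bool → Bool) (ω : ℕ → Bool) : Set ℕ :=
  {i | s (prefixFn ω i) = true}

/-- The subsequence selected by `s` from `ω`: the selected terms, in increasing order of
index (meaningful when the selected index set is infinite). -/
noncomputable def SelectedSeq (s : List Bool → Bool) (ω : ℕ → Bool) : ℕ → Bool :=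
  fun n => ω (Nat.nth (· ∈ SelectedIndices s ω) n)

/-- Requirement II for the selection rule `s` with limit `p`: the subsequence selected by
`s` is finite or has limit frequency `p`. -/
def SatisfiesII (s : List Bool → Bool) (ω : ℕ → Bool) (p : ℝ) : Prop :=
  (SelectedIndices s ω).Finite ∨ LimitFreq (SelectedSeq s ω) p

/-- A (non-negative) martingale. -/
def IsMartingale (m : List Bool → ℝ) : Prop :=
  (∀ x, 0 ≤ m x) ∧ ∀ x, m x = (m (x ++ [false]) + m (x ++ [true])) / 2

/-- A (non-negative) supermartingale. -/
def IsSupermartingale (m : List Bool → ℝ) : Prop :=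
  (∀ x, 0 ≤ m x) ∧ ∀ x, (m (x ++ [false]) + m (x ++ [true])) / 2 ≤ m x

/-- `m` wins against `ω`: the values of `m` on the prefixes of `ω` are unbounded. -/
def Wins (m : List Bool → ℝ) (ω : ℕ → Bool) : Prop :=
  ∀ C : ℝ, ∃ n, C < m (prefixFn ω n)

/-- The cylinder of all infinite sequences extending the finite string `w`. -/
def cyl (w : List Bool) : Set (ℕ → Bool) := {ω | prefixFn ω w.length = w}

/-- `μ` is the uniform (fair-coin) measure on Cantor space, i.e. the infinite product
over `ℕ` of the uniform measure on `Bool`; it is characterized by its values on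
cylinders: `μ (cyl w) = 2 ^ (- length w)`. -/
def IsUniformMeasure (μ : Measure (ℕ → Bool)) : Prop :=
  ∀ w : List Bool, μ (cyl w) = ((2 : ℝ≥0∞) ^ w.length)⁻¹

/-- `X` is an effectively null set: some computable `g` produces, for every `k`, a
sequence of (optional) strings whose cylinders cover `X` and whose total measure is at
most `2^(-k)`. -/
def EffNull (X : Set (ℕ → Bool)) : Prop :=
  ∃ g : ℕ → ℕ → Option (List Bool), Computable₂ g ∧
    ∀ k : ℕ,
      (X ⊆ ⋃ n : ℕ, ⋃ w ∈ g k n, cyl w) ∧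
      (∑' n : ℕ, ((g k n).elim 0 fun w => ((2 : ℝ≥0∞) ^ w.length)⁻¹)) ≤
        ((2 : ℝ≥0∞) ^ k)⁻¹

/-- `ω` is Martin-Löf random: it belongs to no effectively null set. -/
def MLRandom (ω : ℕ → Bool) : Prop := ∀ X : Set (ℕ → Bool), EffNull X → ω ∉ X

/-- A canonical `Primcodable` structure on `ℚ`, via its canonical enumeration. -/
instance : Primcodable ℚ := Primcodable.ofEquiv ℕ (Denumerable.eqv ℚ)

/-- `f` is lower semicomputable: it is the pointwise supremum of a computable family of
rationals, nondecreasing in the second argument. -/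
def LowerSemicomputableFn (f : List Bool → ℝ) : Prop :=
  ∃ g : List Bool → ℕ → ℚ, Computable₂ g ∧ (∀ x, Monotone fun n => g x n) ∧
    ∀ x, f x = ⨆ n, ((g x n : ℝ))

/-- `f` is computable: some computable family of rationals approximates it within
`2^(-n)`. -/
def ComputableFn (f : List Bool → ℝ) : Prop :=
  ∃ g : List Bool → ℕ → ℚ, Computable₂ g ∧
    ∀ x n, |((g x n : ℝ)) - f x| ≤ (2 : ℝ) ^ (-(n : ℤ))

namespace Wald

noncomputable def T (p : ℝ) (x : ℝ) : ℝ := if x < p then x / p else (x - p) / (1 - p)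

noncomputable def bits (p : ℝ) (x : ℝ) : ℕ → Bool := fun n => decide ((T p)^[n] x < p)

noncomputable def wlen (p : ℝ) (w : List Bool) : ℝ :=
  (w.map fun c => if c then p else 1 - p).prod

noncomputable def wa (p : ℝ) : List Bool → ℝ
  | [] => 0
  | true :: w => p * wa p w
  | false :: w => p + (1 - p) * wa p w

variable {p : ℝ}

lemma wlen_nil : wlen p [] = 1 := by simp [wlen]

lemma wlen_cons (c : Bool) (w : List Bool) :
    wlen p (c :: w) = (if c then p else 1 - p) * wlen p w := by simp [wlen]

lemma wlen_concat (w : List Bool) (c : Bool) :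
    wlen p (w ++ [c]) = wlen p w * (if c then p else 1 - p) := by simp [wlen]

lemma wlen_pos (hp0 : 0 < p) (hp1 : p < 1) (w : List Bool) : 0 < wlen p w := by
  induction w with
  | nil => simp [wlen]
  | cons c w ih =>
    rw [wlen_cons]
    cases c <;> simp <;> nlinarith

lemma wlen_nonneg (hp0 : 0 < p) (hp1 : p < 1) (w : List Bool) : 0 ≤ wlen p w :=
  (wlen_pos hp0 hp1 w).le

lemma wa_nonneg (hp0 : 0 < p) (hp1 : p < 1) (w : List Bool) : 0 ≤ wa p w := by
  induction w with
  | nil => simp [wa]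
  | cons c w ih => cases c <;> simp [wa] <;> nlinarith

lemma wa_add_wlen_le_one (hp0 : 0 < p) (hp1 : p < 1) (w : List Bool) :
    wa p w + wlen p w ≤ 1 := by
  induction w with
  | nil => simp [wa, wlen]
  | cons c w ih =>
    have h1 := wa_nonneg hp0 hp1 w
    have h2 := wlen_nonneg hp0 hp1 w
    cases c <;> simp [wa, wlen_cons] <;> nlinarith

lemma wlen_cons_true (w : List Bool) : wlen p (true :: w) = p * wlen p w := by
  simp [wlen]

lemma wlen_cons_false (w : List Bool) : wlen p (false :: w) = (1 - p) * wlen p w := by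
  simp [wlen]

lemma bits_succ (x : ℝ) (n : ℕ) : bits p x (n + 1) = bits p (T p x) n := by
  simp [bits, Function.iterate_succ_apply]
  congr

lemma prefixFn_succ (ω : ℕ → Bool) (n : ℕ) :
    prefixFn ω (n + 1) = ω 0 :: prefixFn (fun i => ω (i + 1)) n := by
  simp [prefixFn, List.ofFn_succ]

lemma bits_shift (x : ℝ) : (fun i => bits p x (i + 1)) = bits p (T p x) :=
  funext fun i => bits_succ x i

lemma bits_zero (x : ℝ) : bits p x 0 = decide (x < p) := by simp [bits]; congr

lemma prefixFn_length (ω : ℕ → Bool) (n : ℕ) : (prefixFn ω n).length = n := by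
  simp [prefixFn]

/-- Main structural lemma: prefix determination vs intervals. -/
lemma mem_interval_iff (hp0 : 0 < p) (hp1 : p < 1) :
    ∀ (w : List Bool) (x : ℝ),
      (x ∈ Ico (0:ℝ) 1 ∧ prefixFn (bits p x) w.length = w) ↔
        x ∈ Ico (wa p w) (wa p w + wlen p w) := by
  intro w
  induction w with
  | nil => intro x; simp [prefixFn, wa, wlen]
  | cons c w ih =>
    intro x
    have hbd := wa_add_wlen_le_one hp0 hp1 w
    have hwa := wa_nonneg hp0 hp1 w
    have hwl := wlen_nonneg hp0 hp1 w
    have hlen : (c :: w).length = w.length + 1 := rfl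
    rw [hlen, prefixFn_succ, bits_shift, bits_zero]
    cases c with
    | true =>
      simp only [wa, wlen_cons_true, mem_Ico]
      constructor
      · rintro ⟨⟨hx0, hx1⟩, hpre⟩
        rw [List.cons_eq_cons] at hpre
        obtain ⟨hb, hw⟩ := hpre
        have hxp : x < p := by simpa using hb
        have hT : T p x = x / p := if_pos hxp
        have hmem := (ih (T p x)).1 ⟨⟨by rw [hT]; positivity,
          by rw [hT]; exact (div_lt_one hp0).2 hxp⟩, hw⟩
        rw [hT, mem_Ico] at hmem
        obtain ⟨h1, h2⟩ := hmem
        rw [le_div_iff₀ hp0] at h1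
        rw [div_lt_iff₀ hp0] at h2
        constructor <;> nlinarith
      · rintro ⟨h1, h2⟩
        have hx0 : 0 ≤ x := by nlinarith
        have hxp : x < p := by nlinarith
        have hT : T p x = x / p := if_pos hxp
        have hmem := (ih (T p x)).2 (by
          rw [hT, mem_Ico]
          constructor
          · rw [le_div_iff₀ hp0]; nlinarith
          · rw [div_lt_iff₀ hp0]; nlinarith)
        obtain ⟨_, hw⟩ := hmem
        exact ⟨⟨hx0, by nlinarith⟩, by simp [hxp, hw]⟩
    | false =>
      simp only [wa, wlen_cons_false, mem_Ico]
      constructor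
      · rintro ⟨⟨hx0, hx1⟩, hpre⟩
        rw [List.cons_eq_cons] at hpre
        obtain ⟨hb, hw⟩ := hpre
        have hxp : ¬ x < p := by simpa using hb
        have hT : T p x = (x - p) / (1 - p) := if_neg hxp
        push_neg at hxp
        have hmem := (ih (T p x)).1 ⟨⟨by
          rw [hT]; exact div_nonneg (by linarith) (by linarith), by
          rw [hT]; rw [div_lt_one (by linarith)]; linarith⟩, hw⟩
        rw [hT, mem_Ico] at hmem
        obtain ⟨h1, h2⟩ := hmem
        rw [le_div_iff₀ (by linarith : (0:ℝ) < 1 - p)] at h1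
        rw [div_lt_iff₀ (by linarith : (0:ℝ) < 1 - p)] at h2
        constructor <;> nlinarith
      · rintro ⟨h1, h2⟩
        have hxp : ¬ x < p := by push_neg; nlinarith
        have hT : T p x = (x - p) / (1 - p) := if_neg hxp
        have hmem := (ih (T p x)).2 (by
          rw [hT, mem_Ico]
          constructor
          · rw [le_div_iff₀ (by linarith : (0:ℝ) < 1 - p)]; nlinarith
          · rw [div_lt_iff₀ (by linarith : (0:ℝ) < 1 - p)]; nlinarith)
        obtain ⟨_, hw⟩ := hmem
        push_neg at hxp
        have hnl : ¬ x < p := not_lt.2 hxp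
        exact ⟨⟨by linarith, by nlinarith⟩, by simp [hnl, hw]⟩

lemma wlen_le_pow (hp0 : 0 < p) (hp1 : p < 1) (w : List Bool) :
    wlen p w ≤ (max p (1 - p)) ^ w.length := by
  induction w with
  | nil => simp [wlen]
  | cons c w ih =>
    rw [wlen_cons]
    have h1 : (if c then p else 1 - p) ≤ max p (1 - p) := by
      cases c <;> simp [le_max_left, le_max_right]
    have h2 : (0:ℝ) ≤ max p (1 - p) := le_max_of_le_left hp0.le
    calc (if c then p else 1 - p) * wlen p w
        ≤ max p (1 - p) * (max p (1 - p)) ^ w.length := by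
          apply mul_le_mul h1 ih (wlen_nonneg hp0 hp1 w) h2
      _ = (max p (1 - p)) ^ (c :: w).length := by rw [List.length_cons, pow_succ]; ring

lemma bits_injOn (hp0 : 0 < p) (hp1 : p < 1) : InjOn (bits p) (Ico (0:ℝ) 1) := by
  intro x hx y hy hxy
  have hq0 : (0:ℝ) ≤ max p (1 - p) := le_max_of_le_left hp0.le
  have hq1 : max p (1 - p) < 1 := max_lt hp1 (by linarith)
  have key : ∀ n : ℕ, |x - y| ≤ (max p (1 - p)) ^ n := by
    intro n
    set w := prefixFn (bits p x) n with hw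
    have hlw : w.length = n := prefixFn_length _ _
    have h1 : x ∈ Ico (wa p w) (wa p w + wlen p w) :=
      (mem_interval_iff hp0 hp1 w x).1 ⟨hx, by rw [hlw]⟩
    have h2 : y ∈ Ico (wa p w) (wa p w + wlen p w) :=
      (mem_interval_iff hp0 hp1 w y).1 ⟨hy, by rw [hlw, hw, hxy]⟩
    rw [mem_Ico] at h1 h2
    have := wlen_le_pow hp0 hp1 w
    rw [hlw] at this
    rw [abs_sub_le_iff]
    constructor <;> nlinarith
  have h0 : |x - y| ≤ 0 := by
    have ht : Tendsto (fun n : ℕ => (max p (1 - p)) ^ n) atTop (nhds 0) :=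
      tendsto_pow_atTop_nhds_zero_of_lt_one hq0 hq1
    exact ge_of_tendsto ht (Eventually.of_forall key)
  have : x - y = 0 := by
    have := abs_nonneg (x - y)
    have habs : |x - y| = 0 := le_antisymm h0 this
    exact abs_eq_zero.1 habs
  linarith

/-- The bridge: integrals of prefix functions are finite sums over words. -/
lemma prefixFn_eq_ofFn (ω : ℕ → Bool) (n : ℕ) :
    prefixFn ω n = List.ofFn fun i : Fin n => ω i := rfl

lemma mem_interval_of_word (hp0 : 0 < p) (hp1 : p < 1) {n : ℕ} (v : Fin n → Bool) {x : ℝ}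
    (hx : x ∈ Ico (wa p (List.ofFn v)) (wa p (List.ofFn v) + wlen p (List.ofFn v))) :
    x ∈ Ico (0:ℝ) 1 ∧ prefixFn (bits p x) n = List.ofFn v := by
  have h := (mem_interval_iff hp0 hp1 (List.ofFn v) x).2 hx
  rwa [List.length_ofFn] at h

lemma interval_partition (hp0 : 0 < p) (hp1 : p < 1) (n : ℕ) :
    Ico (0:ℝ) 1 = ⋃ v ∈ (Finset.univ : Finset (Fin n → Bool)),
      Ico (wa p (List.ofFn v)) (wa p (List.ofFn v) + wlen p (List.ofFn v)) := by
  ext x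
  simp only [mem_iUnion, Finset.mem_univ, exists_prop, true_and]
  constructor
  · intro hx
    refine ⟨fun i => bits p x i, ?_⟩
    apply (mem_interval_iff hp0 hp1 (List.ofFn fun i : Fin n => bits p x i) x).1
    exact ⟨hx, by rw [List.length_ofFn]; rfl⟩
  · rintro ⟨v, hv⟩
    exact (mem_interval_of_word hp0 hp1 v hv).1

lemma integral_prefix (hp0 : 0 < p) (hp1 : p < 1) (G : List Bool → ℝ) (n : ℕ) :
    ∫ x in Ico (0:ℝ) 1, G (prefixFn (bits p x) n) =
      ∑ v : Fin n → Bool, wlen p (List.ofFn v) * G (List.ofFn v) := by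
  have hdisj : ((Finset.univ : Finset (Fin n → Bool)) : Set (Fin n → Bool)).Pairwise
      (Function.onFun Disjoint fun v : Fin n → Bool =>
        Ico (wa p (List.ofFn v)) (wa p (List.ofFn v) + wlen p (List.ofFn v))) := by
    intro v _ v' _ hvv'
    rw [Function.onFun, Set.disjoint_left]
    intro x hx hx'
    have h1 := (mem_interval_of_word hp0 hp1 v hx).2
    have h2 := (mem_interval_of_word hp0 hp1 v' hx').2
    exact hvv' (funext fun i => by
      have := h1.symm.trans h2
      rw [List.ofFn_inj] at this
      exact congrFun this i)
  have heq : ∀ v : Fin n → Bool, EqOn (fun x => G (prefixFn (bits p x) n))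
      (fun _ => G (List.ofFn v))
      (Ico (wa p (List.ofFn v)) (wa p (List.ofFn v) + wlen p (List.ofFn v))) := by
    intro v x hx
    simp only
    rw [(mem_interval_of_word hp0 hp1 v hx).2]
  have hint : ∀ v ∈ (Finset.univ : Finset (Fin n → Bool)),
      IntegrableOn (fun x => G (prefixFn (bits p x) n))
        (Ico (wa p (List.ofFn v)) (wa p (List.ofFn v) + wlen p (List.ofFn v))) volume := by
    intro v _
    apply IntegrableOn.congr_fun _ (heq v).symm measurableSet_Ico
    exact integrableOn_const measure_Ico_lt_top.ne
  rw [interval_partition hp0 hp1 n,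
    integral_biUnion_finset Finset.univ (fun v _ => measurableSet_Ico) hdisj hint]
  rw [Finset.sum_congr rfl (fun v _ => ?_)]
  rw [setIntegral_congr_fun measurableSet_Ico (heq v), setIntegral_const]
  rw [Real.volume_real_Ico_of_le (by linarith [wlen_nonneg hp0 hp1 (List.ofFn v)])]
  have : wa p (List.ofFn v) + wlen p (List.ofFn v) - wa p (List.ofFn v) =
      wlen p (List.ofFn v) := by ring
  rw [this, smul_eq_mul]

lemma measurable_bits_coord (i : ℕ) : Measurable fun x => bits p x i := by
  have hT : Measurable (T p) := by
    unfold T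
    apply Measurable.ite (measurableSet_lt measurable_id measurable_const)
    · exact measurable_id.div_const p
    · exact (measurable_id.sub_const p).div_const (1 - p)
  have hit : Measurable ((T p)^[i]) := hT.iterate i
  have hd : Measurable fun y : ℝ => decide (y < p) := by
    have : (fun y : ℝ => decide (y < p)) = fun y => if y < p then true else false := by
      funext y; by_cases h : y < p <;> simp [h]
    rw [this]
    exact Measurable.ite (measurableSet_lt measurable_id measurable_const)
      measurable_const measurable_const
  exact hd.comp hit

lemma measurable_prefix_comp (G : List Bool → ℝ) (K : ℕ) :
    Measurable fun x => G (prefixFn (bits p x) K) := by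
  have h1 : Measurable fun x (i : Fin K) => bits p x i :=
    measurable_pi_lambda _ fun i => measurable_bits_coord (i : ℕ)
  have h2 : Measurable fun v : Fin K → Bool => G (List.ofFn v) :=
    measurable_of_countable _
  exact h2.comp h1

lemma integrableOn_of_bounded {f : ℝ → ℝ} (hm : Measurable f) (C : ℝ)
    (hC : ∀ x, |f x| ≤ C) : IntegrableOn f (Ico (0:ℝ) 1) volume := by
  haveI : IsFiniteMeasure (volume.restrict (Ico (0:ℝ) 1)) := by
    constructor
    rw [Measure.restrict_apply_univ]
    exact measure_Ico_lt_top
  exact (integrable_const C).mono' hm.aestronglyMeasurable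
    (Eventually.of_forall fun x => by simpa [Real.norm_eq_abs] using hC x)

section Rule

variable (s : List Bool → Bool)

/-- Truncated `i`-th selected-bit martingale difference. -/
noncomputable def DT (s : List Bool → Bool) (p : ℝ) (i K : ℕ) (ω : ℕ → Bool) : ℝ :=
  ∑ k ∈ Finset.range K,
    if s (prefixFn ω k) = true ∧ Nat.count (fun j => s (prefixFn ω j) = true) k = i
    then ((if ω k then (1:ℝ) else 0) - p) else 0

open scoped Classical in
/-- The `i`-th selected-bit martingale difference. -/
noncomputable def D (s : List Bool → Bool) (p : ℝ) (i : ℕ) (ω : ℕ → Bool) : ℝ :=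
  if h : ∃ k, s (prefixFn ω k) = true ∧ Nat.count (fun j => s (prefixFn ω j) = true) k = i
  then ((if ω (Nat.find h) then (1:ℝ) else 0) - p) else 0

lemma cond_unique (ω : ℕ → Bool) (i : ℕ) {k k' : ℕ}
    (h : s (prefixFn ω k) = true ∧ Nat.count (fun j => s (prefixFn ω j) = true) k = i)
    (h' : s (prefixFn ω k') = true ∧ Nat.count (fun j => s (prefixFn ω j) = true) k' = i) :
    k = k' := by
  have e1 : Nat.nth (fun j => s (prefixFn ω j) = true) i = k := by
    rw [← h.2]; exact Nat.nth_count h.1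
  have e2 : Nat.nth (fun j => s (prefixFn ω j) = true) i = k' := by
    rw [← h'.2]; exact Nat.nth_count h'.1
  rw [← e1, e2]

lemma DT_tendsto (ω : ℕ → Bool) (i : ℕ) :
    Tendsto (fun K => DT s p i K ω) atTop (nhds (D s p i ω)) := by
  classical
  by_cases h : ∃ k, s (prefixFn ω k) = true ∧
      Nat.count (fun j => s (prefixFn ω j) = true) k = i
  · apply tendsto_atTop_of_eventually_const (i₀ := Nat.find h + 1)
    intro K hK
    rw [DT, D, dif_pos h]
    rw [Finset.sum_eq_single_of_mem (Nat.find h) (Finset.mem_range.2 (by omega))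
      (fun b _ hb => if_neg fun hc => hb (cond_unique s ω i hc (Nat.find_spec h)))]
    rw [if_pos (Nat.find_spec h)]
  · apply tendsto_atTop_of_eventually_const (i₀ := 0)
    intro K _
    rw [DT, D, dif_neg h]
    apply Finset.sum_eq_zero
    intro k _
    apply if_neg
    intro hc
    exact h ⟨k, hc⟩

lemma abs_DT_le (hp0 : 0 < p) (hp1 : p < 1) (i K : ℕ) (ω : ℕ → Bool) :
    |DT s p i K ω| ≤ 1 := by
  classical
  by_cases h : ∃ k ∈ Finset.range K, s (prefixFn ω k) = true ∧
      Nat.count (fun j => s (prefixFn ω j) = true) k = i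
  · obtain ⟨k0, hk0, hc⟩ := h
    rw [DT, Finset.sum_eq_single_of_mem k0 hk0 (fun b _ hb => if_neg fun hcb =>
      hb (cond_unique s ω i hcb hc)), if_pos hc]
    cases hω : ω k0 <;> simp <;> rw [abs_le] <;> constructor <;> linarith
  · rw [DT, Finset.sum_eq_zero fun k hk => if_neg fun hc => h ⟨k, hk, hc⟩]
    simp

lemma abs_D_le (hp0 : 0 < p) (hp1 : p < 1) (i : ℕ) (ω : ℕ → Bool) :
    |D s p i ω| ≤ 1 := by
  classical
  rw [D]
  split
  · cases hω : ω _ <;> simp <;> rw [abs_le] <;> constructor <;> linarith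
  · simp

/-- Word-level count. -/
def wcnt (s : List Bool → Bool) (w : List Bool) (k : ℕ) : ℕ :=
  ((Finset.range k).filter fun j => s (w.take j) = true).card

/-- Word-level version of `DT`. -/
noncomputable def GDT (s : List Bool → Bool) (p : ℝ) (i K : ℕ) (w : List Bool) : ℝ :=
  ∑ k ∈ Finset.range K,
    if s (w.take k) = true ∧ wcnt s w k = i
    then ((if w.getD k false then (1:ℝ) else 0) - p) else 0

lemma prefixFn_take (ω : ℕ → Bool) {k K : ℕ} (h : k ≤ K) :
    (prefixFn ω K).take k = prefixFn ω k := by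
  apply List.ext_getElem
  · simp [prefixFn, List.length_take]; omega
  · intro n h1 h2
    simp only [prefixFn] at *
    rw [List.getElem_take, List.getElem_ofFn, List.getElem_ofFn]

lemma prefixFn_getD (ω : ℕ → Bool) {k K : ℕ} (h : k < K) :
    (prefixFn ω K).getD k false = ω k := by
  rw [List.getD_eq_getElem _ _ (by simpa [prefixFn] using h)]
  simp [prefixFn]

lemma count_eq_wcnt (ω : ℕ → Bool) {k K : ℕ} (h : k ≤ K) :
    Nat.count (fun j => s (prefixFn ω j) = true) k = wcnt s (prefixFn ω K) k := by
  rw [Nat.count_eq_card_filter_range, wcnt]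
  congr 1
  apply Finset.filter_congr
  intro j hj
  rw [prefixFn_take ω (le_trans (le_of_lt (Finset.mem_range.1 hj)) h)]

lemma DT_eq_word (i K : ℕ) (ω : ℕ → Bool) :
    DT s p i K ω = GDT s p i K (prefixFn ω K) := by
  rw [DT, GDT]
  apply Finset.sum_congr rfl
  intro k hk
  have hk' := Finset.mem_range.1 hk
  rw [prefixFn_take ω hk'.le, ← count_eq_wcnt s ω hk'.le, prefixFn_getD ω hk']

lemma measurable_DT (i K : ℕ) : Measurable fun x => DT s p i K (bits p x) := by
  have : (fun x => DT s p i K (bits p x)) =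
      fun x => GDT s p i K (prefixFn (bits p x) K) := by
    funext x; rw [DT_eq_word]
  rw [this]
  exact measurable_prefix_comp _ K

lemma measurable_D (i : ℕ) : Measurable fun x => D s p i (bits p x) := by
  apply measurable_of_tendsto_metrizable (f := fun K x => DT s p i K (bits p x))
    (fun K => measurable_DT s i K)
  rw [tendsto_pi_nhds]
  intro x
  exact DT_tendsto s (bits p x) i

/-- Key vanishing lemma: a function of the first `l` bits times the centered `l`-th bit
integrates to zero. -/
lemma ofFn_snoc {l : ℕ} (u : Fin l → Bool) (b : Bool) :
    List.ofFn (Fin.snoc u b : Fin (l+1) → Bool) = List.ofFn u ++ [b] := by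
  rw [List.ofFn_succ']
  simp [Fin.snoc_castSucc, Fin.snoc_last, List.concat_eq_append]

lemma integral_mul_step (hp0 : 0 < p) (hp1 : p < 1) (H : List Bool → ℝ) (l : ℕ) :
    ∫ x in Ico (0:ℝ) 1,
      H (prefixFn (bits p x) l) * ((if bits p x l then (1:ℝ) else 0) - p) = 0 := by
  have key : (fun x => H (prefixFn (bits p x) l) * ((if bits p x l then (1:ℝ) else 0) - p)) =
      fun x => (fun w : List Bool =>
        H (w.take l) * ((if w.getD l false then (1:ℝ) else 0) - p))
        (prefixFn (bits p x) (l+1)) := by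
    funext x
    simp only
    rw [prefixFn_take (bits p x) (Nat.le_succ l), prefixFn_getD (bits p x) (Nat.lt_succ_self l)]
  calc ∫ x in Ico (0:ℝ) 1,
        H (prefixFn (bits p x) l) * ((if bits p x l then (1:ℝ) else 0) - p)
      = ∫ x in Ico (0:ℝ) 1, (fun w : List Bool =>
          H (w.take l) * ((if w.getD l false then (1:ℝ) else 0) - p))
          (prefixFn (bits p x) (l+1)) := by rw [key]
    _ = ∑ v : Fin (l+1) → Bool, wlen p (List.ofFn v) *
          (H ((List.ofFn v).take l) * ((if (List.ofFn v).getD l false then (1:ℝ) else 0) - p)) :=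
        integral_prefix hp0 hp1 (fun w : List Bool =>
          H (w.take l) * ((if w.getD l false then (1:ℝ) else 0) - p)) (l+1)
    _ = 0 := by
        rw [← Equiv.sum_comp (Fin.snocEquiv (fun _ : Fin (l+1) => Bool))
          (fun v : Fin (l+1) → Bool => wlen p (List.ofFn v) *
            (H ((List.ofFn v).take l) *
              ((if (List.ofFn v).getD l false then (1:ℝ) else 0) - p)))]
        rw [Fintype.sum_prod_type]
        rw [Fintype.sum_bool]
        have hsnoc : ∀ (b : Bool) (u : Fin l → Bool),
            List.ofFn ((Fin.snocEquiv (fun _ : Fin (l+1) => Bool)) (b, u)) =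
              List.ofFn u ++ [b] := fun b u => ofFn_snoc u b
        have hkey : ∀ (b : Bool) (u : Fin l → Bool),
            (fun v : Fin (l+1) → Bool => wlen p (List.ofFn v) *
              (H ((List.ofFn v).take l) *
                ((if (List.ofFn v).getD l false then (1:ℝ) else 0) - p)))
              ((Fin.snocEquiv (fun _ : Fin (l+1) => Bool)) (b, u))
            = wlen p (List.ofFn u) * (if b then p else 1 - p) *
                (H (List.ofFn u) * ((if b then (1:ℝ) else 0) - p)) := by
          intro b u
          simp only [hsnoc]
          rw [wlen_concat, List.take_left' (by simp),
            List.getD_append_right _ _ _ _ (by simp)]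
          simp only [List.length_ofFn, Nat.sub_self]
          cases b
          all_goals simp
        rw [Finset.sum_congr rfl (fun u _ => hkey true u),
          Finset.sum_congr rfl (fun u _ => hkey false u), ← Finset.sum_add_distrib]
        apply Finset.sum_eq_zero
        intro u _
        simp
        try ring

/-- Orthogonality of the martingale differences. -/
lemma DT_stable {i j : ℕ} (hij : i < j) {l K : ℕ} (hlK : l ≤ K) (ω : ℕ → Bool)
    (hl : Nat.count (fun m => s (prefixFn ω m) = true) l = j) :
    DT s p i K ω = DT s p i l ω := by
  rw [DT, DT]
  symm
  apply Finset.sum_subset (Finset.range_subset_range.2 hlK)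
  intro k _ hk
  have hlk : l ≤ k := by
    by_contra hc
    exact hk (Finset.mem_range.2 (by omega))
  apply if_neg
  rintro ⟨hq, hcnt⟩
  have := Nat.count_monotone (fun m => s (prefixFn ω m) = true) hlk
  omega

lemma integral_DT_mul (hp0 : 0 < p) (hp1 : p < 1) {i j : ℕ} (hij : i < j) (K : ℕ) :
    ∫ x in Ico (0:ℝ) 1, DT s p i K (bits p x) * DT s p j K (bits p x) = 0 := by
  classical
  set Hl : ℕ → List Bool → ℝ := fun l w =>
    if s w = true ∧ wcnt s w w.length = j then GDT s p i l w else 0 with hHl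
  have expand : ∀ ω : ℕ → Bool, DT s p i K ω * DT s p j K ω =
      ∑ l ∈ Finset.range K,
        Hl l (prefixFn ω l) * ((if ω l then (1:ℝ) else 0) - p) := by
    intro ω
    conv_lhs => rw [show DT s p j K ω = ∑ l ∈ Finset.range K,
      (if s (prefixFn ω l) = true ∧
          Nat.count (fun m => s (prefixFn ω m) = true) l = j
        then ((if ω l then (1:ℝ) else 0) - p) else 0) from rfl]
    rw [Finset.mul_sum]
    apply Finset.sum_congr rfl
    intro l hlK
    have hlK' := (Finset.mem_range.1 hlK).le
    have hcond : (s (prefixFn ω l) = true ∧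
          Nat.count (fun m => s (prefixFn ω m) = true) l = j) ↔
        (s (prefixFn ω l) = true ∧
          wcnt s (prefixFn ω l) (prefixFn ω l).length = j) := by
      rw [prefixFn_length, ← count_eq_wcnt s ω le_rfl]
    by_cases hc : s (prefixFn ω l) = true ∧
        Nat.count (fun m => s (prefixFn ω m) = true) l = j
    · rw [if_pos hc, hHl]
      simp only
      rw [if_pos (hcond.1 hc), ← DT_eq_word, ← DT_stable s hij hlK' ω hc.2]
    · rw [if_neg hc, hHl]
      simp only
      rw [if_neg (fun h => hc (hcond.2 h))]
      ring
  have hmeas : ∀ l : ℕ, Measurable fun x =>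
      Hl l (prefixFn (bits p x) l) * ((if bits p x l then (1:ℝ) else 0) - p) := by
    intro l
    apply Measurable.mul (measurable_prefix_comp (Hl l) l)
    have : (fun x => (if bits p x l then (1:ℝ) else 0) - p) =
        (fun b : Bool => (if b then (1:ℝ) else 0) - p) ∘ (fun x => bits p x l) := rfl
    rw [this]
    exact (measurable_of_countable _).comp (measurable_bits_coord l)
  have hbdd : ∀ l x, |Hl l (prefixFn (bits p x) l) * ((if bits p x l then (1:ℝ) else 0) - p)| ≤ 1 := by
    intro l x
    rw [abs_mul]
    have h1 : |Hl l (prefixFn (bits p x) l)| ≤ 1 := by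
      rw [hHl]; simp only
      split
      · rw [← DT_eq_word]; exact abs_DT_le s hp0 hp1 i l (bits p x)
      · simp
    have h2 : |(if bits p x l then (1:ℝ) else 0) - p| ≤ 1 := by
      cases hb : bits p x l <;> simp <;> rw [abs_le] <;> constructor <;> linarith
    calc |Hl l (prefixFn (bits p x) l)| * |(if bits p x l then (1:ℝ) else 0) - p|
        ≤ 1 * 1 := mul_le_mul h1 h2 (abs_nonneg _) zero_le_one
      _ = 1 := by ring
  calc ∫ x in Ico (0:ℝ) 1, DT s p i K (bits p x) * DT s p j K (bits p x)
      = ∫ x in Ico (0:ℝ) 1, ∑ l ∈ Finset.range K,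
          Hl l (prefixFn (bits p x) l) * ((if bits p x l then (1:ℝ) else 0) - p) := by
        apply setIntegral_congr_fun measurableSet_Ico
        intro x _
        exact expand (bits p x)
    _ = ∑ l ∈ Finset.range K, ∫ x in Ico (0:ℝ) 1,
          Hl l (prefixFn (bits p x) l) * ((if bits p x l then (1:ℝ) else 0) - p) := by
        apply integral_finset_sum
        intro l _
        exact integrableOn_of_bounded (hmeas l) 1 (hbdd l)
    _ = 0 := by
        apply Finset.sum_eq_zero
        intro l _
        exact integral_mul_step hp0 hp1 (Hl l) l

lemma integrableOn_DT_mul (hp0 : 0 < p) (hp1 : p < 1) (i j K : ℕ) :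
    IntegrableOn (fun x => DT s p i K (bits p x) * DT s p j K (bits p x))
      (Ico (0:ℝ) 1) volume := by
  apply integrableOn_of_bounded ((measurable_DT s i K).mul (measurable_DT s j K)) 1
  intro x
  rw [Pi.mul_apply, abs_mul]
  calc |DT s p i K (bits p x)| * |DT s p j K (bits p x)| ≤ 1 * 1 :=
      mul_le_mul (abs_DT_le s hp0 hp1 i K _) (abs_DT_le s hp0 hp1 j K _)
        (abs_nonneg _) zero_le_one
    _ = 1 := by ring

lemma integral_sq_sum_DT_le (hp0 : 0 < p) (hp1 : p < 1) (n K : ℕ) :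
    ∫ x in Ico (0:ℝ) 1, (∑ i ∈ Finset.range n, DT s p i K (bits p x))^2 ≤ n := by
  have hexp : ∀ x : ℝ, (∑ i ∈ Finset.range n, DT s p i K (bits p x))^2 =
      ∑ i ∈ Finset.range n, ∑ j ∈ Finset.range n,
        DT s p i K (bits p x) * DT s p j K (bits p x) := by
    intro x
    rw [sq, Finset.sum_mul_sum]
  calc ∫ x in Ico (0:ℝ) 1, (∑ i ∈ Finset.range n, DT s p i K (bits p x))^2
      = ∑ i ∈ Finset.range n, ∑ j ∈ Finset.range n,
          ∫ x in Ico (0:ℝ) 1, DT s p i K (bits p x) * DT s p j K (bits p x) := by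
        rw [setIntegral_congr_fun measurableSet_Ico (fun x _ => hexp x)]
        rw [integral_finset_sum _ (fun i _ => integrable_finset_sum _
          (fun j _ => integrableOn_DT_mul s hp0 hp1 i j K))]
        exact Finset.sum_congr rfl fun i _ =>
          integral_finset_sum _ (fun j _ => integrableOn_DT_mul s hp0 hp1 i j K)
    _ ≤ ∑ i ∈ Finset.range n, ∑ j ∈ Finset.range n, (if i = j then (1:ℝ) else 0) := by
        apply Finset.sum_le_sum
        intro i _
        apply Finset.sum_le_sum
        intro j _
        by_cases hij : i = j
        · rw [if_pos hij, ← hij]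
          calc ∫ x in Ico (0:ℝ) 1, DT s p i K (bits p x) * DT s p i K (bits p x)
              ≤ ∫ _ in Ico (0:ℝ) 1, (1:ℝ) := by
                apply setIntegral_mono_on (integrableOn_DT_mul s hp0 hp1 i i K)
                  (integrableOn_const measure_Ico_lt_top.ne) measurableSet_Ico
                intro x _
                have h := abs_DT_le s hp0 hp1 i K (bits p x)
                calc DT s p i K (bits p x) * DT s p i K (bits p x)
                    = |DT s p i K (bits p x)| * |DT s p i K (bits p x)| := by
                      rw [← abs_mul, abs_mul_self]
                  _ ≤ 1 * 1 := mul_le_mul h h (abs_nonneg _) zero_le_one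
                  _ = 1 := by ring
            _ = 1 := by
                rw [setIntegral_const, Real.volume_real_Ico, smul_eq_mul]
                norm_num
        · rw [if_neg hij]
          rcases lt_or_gt_of_ne hij with h | h
          · exact le_of_eq (integral_DT_mul s hp0 hp1 h K)
          · rw [show (fun x => DT s p i K (bits p x) * DT s p j K (bits p x)) =
              (fun x => DT s p j K (bits p x) * DT s p i K (bits p x)) from
              funext fun x => mul_comm _ _]
            exact le_of_eq (integral_DT_mul s hp0 hp1 h K)
    _ = n := by
        rw [Finset.sum_congr rfl (fun i hi => ?_), Finset.sum_const, Finset.card_range,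
          nsmul_eq_mul, mul_one]
        rw [Finset.sum_ite_eq (Finset.range n) i (fun _ => (1:ℝ)), if_pos hi]

lemma abs_sum_D_le (hp0 : 0 < p) (hp1 : p < 1) (n : ℕ) (ω : ℕ → Bool) :
    |∑ i ∈ Finset.range n, D s p i ω| ≤ n := by
  calc |∑ i ∈ Finset.range n, D s p i ω| ≤ ∑ i ∈ Finset.range n, |D s p i ω| :=
      Finset.abs_sum_le_sum_abs _ _
    _ ≤ ∑ _i ∈ Finset.range n, (1:ℝ) :=
      Finset.sum_le_sum fun i _ => abs_D_le s hp0 hp1 i ω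
    _ = n := by simp

lemma abs_sum_DT_le (hp0 : 0 < p) (hp1 : p < 1) (n K : ℕ) (ω : ℕ → Bool) :
    |∑ i ∈ Finset.range n, DT s p i K ω| ≤ n := by
  calc |∑ i ∈ Finset.range n, DT s p i K ω| ≤ ∑ i ∈ Finset.range n, |DT s p i K ω| :=
      Finset.abs_sum_le_sum_abs _ _
    _ ≤ ∑ _i ∈ Finset.range n, (1:ℝ) :=
      Finset.sum_le_sum fun i _ => abs_DT_le s hp0 hp1 i K ω
    _ = n := by simp

lemma measurable_sum_D (n : ℕ) :
    Measurable fun x => ∑ i ∈ Finset.range n, D s p i (bits p x) :=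
  Finset.measurable_sum _ fun i _ => measurable_D s i

lemma integral_sq_sum_D_le (hp0 : 0 < p) (hp1 : p < 1) (n : ℕ) :
    ∫ x in Ico (0:ℝ) 1, (∑ i ∈ Finset.range n, D s p i (bits p x))^2 ≤ n := by
  haveI : IsFiniteMeasure (volume.restrict (Ico (0:ℝ) 1)) := by
    constructor
    rw [Measure.restrict_apply_univ]
    exact measure_Ico_lt_top
  have hlim : Tendsto (fun K => ∫ x in Ico (0:ℝ) 1,
      (∑ i ∈ Finset.range n, DT s p i K (bits p x))^2) atTop
      (nhds (∫ x in Ico (0:ℝ) 1, (∑ i ∈ Finset.range n, D s p i (bits p x))^2)) := by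
    apply tendsto_integral_of_dominated_convergence (fun _ => (n:ℝ)^2)
    · intro K
      exact ((Finset.measurable_sum _ fun i _ => measurable_DT s i K).pow
        measurable_const).aestronglyMeasurable
    · exact integrable_const _
    · intro K
      apply Eventually.of_forall
      intro x
      rw [Real.norm_eq_abs, abs_pow]
      have := abs_sum_DT_le s hp0 hp1 n K (bits p x)
      have h0 : (0:ℝ) ≤ |∑ i ∈ Finset.range n, DT s p i K (bits p x)| := abs_nonneg _
      calc |∑ i ∈ Finset.range n, DT s p i K (bits p x)|^2 ≤ (n:ℝ)^2 := by
            apply pow_le_pow_left₀ h0 this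
        _ ≤ (n:ℝ)^2 := le_rfl
    · apply Eventually.of_forall
      intro x
      exact (tendsto_finset_sum _ fun i _ => DT_tendsto s (bits p x) i).pow 2
  exact le_of_tendsto hlim (Eventually.of_forall fun K =>
    integral_sq_sum_DT_le s hp0 hp1 n K)

/-- Borel–Cantelli along squares. -/
lemma ae_tendsto_sq (hp0 : 0 < p) (hp1 : p < 1) :
    ∀ᵐ x ∂(volume.restrict (Ico (0:ℝ) 1)),
      Tendsto (fun n : ℕ =>
        (∑ i ∈ Finset.range ((n+1)^2), D s p i (bits p x)) / ((n+1)^2 : ℝ))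
        atTop (nhds 0) := by
  classical
  set μ : Measure ℝ := volume.restrict (Ico (0:ℝ) 1) with hμ
  set A : ℕ → ℝ → ℝ := fun n x =>
    (∑ i ∈ Finset.range ((n+1)^2), D s p i (bits p x)) / ((n+1)^2 : ℝ) with hA
  have hAmeas : ∀ n, Measurable (A n) := fun n =>
    (measurable_sum_D s ((n+1)^2)).div_const _
  set g : ℕ → ℝ → ℝ≥0∞ := fun n x => ENNReal.ofReal ((A n x)^2) with hg
  have hgmeas : ∀ n, Measurable (g n) := fun n =>
    ((hAmeas n).pow measurable_const).ennreal_ofReal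
  haveI : IsFiniteMeasure μ := by
    constructor
    rw [hμ, Measure.restrict_apply_univ]
    exact measure_Ico_lt_top
  have hgint : ∀ n, ∫⁻ x, g n x ∂μ ≤ ENNReal.ofReal (1 / ((n:ℝ)+1)^2) := by
    intro n
    have hcast : (((n+1)^2:ℕ):ℝ) = ((n:ℝ)+1)^2 := by push_cast; ring
    have hpos : (0:ℝ) < ((n:ℝ)+1)^2 := by positivity
    have hAle : ∀ x, |A n x| ≤ ((n:ℝ)+1)^2 := by
      intro x
      rw [hA]
      simp only [abs_div]
      rw [abs_of_nonneg hpos.le]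
      have h2 := abs_sum_D_le s hp0 hp1 ((n+1)^2) (bits p x)
      rw [hcast] at h2
      have hn0 : (0:ℝ) ≤ (n:ℝ) := Nat.cast_nonneg n
      have h3 : (1:ℝ) ≤ ((n:ℝ)+1)^2 := by nlinarith
      calc |∑ i ∈ Finset.range ((n+1)^2), D s p i (bits p x)| / ((n:ℝ)+1)^2
          ≤ |∑ i ∈ Finset.range ((n+1)^2), D s p i (bits p x)| :=
            div_le_self (abs_nonneg _) h3
        _ ≤ ((n:ℝ)+1)^2 := h2
    have hint : Integrable (fun x => (A n x)^2) μ :=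
      integrableOn_of_bounded ((hAmeas n).pow measurable_const) ((((n:ℝ)+1)^2)^2)
        (fun x => by rw [abs_pow]; exact pow_le_pow_left₀ (abs_nonneg _) (hAle x) 2)
    rw [← ofReal_integral_eq_lintegral_ofReal hint
      (Eventually.of_forall fun x => sq_nonneg _)]
    apply ENNReal.ofReal_le_ofReal
    have heq : ∀ x, (A n x)^2 =
        (∑ i ∈ Finset.range ((n+1)^2), D s p i (bits p x))^2 / (((n:ℝ)+1)^2)^2 := by
      intro x
      rw [hA]
      simp only
      rw [div_pow]
    rw [integral_congr_ae (Eventually.of_forall heq), integral_div]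
    rw [div_le_div_iff₀ (by positivity) hpos]
    calc (∫ x, (∑ i ∈ Finset.range ((n+1)^2), D s p i (bits p x))^2 ∂μ) * ((n:ℝ)+1)^2
        ≤ (((n+1)^2:ℕ):ℝ) * ((n:ℝ)+1)^2 :=
          mul_le_mul_of_nonneg_right (integral_sq_sum_D_le s hp0 hp1 ((n+1)^2)) hpos.le
      _ = 1 * (((n:ℝ)+1)^2)^2 := by rw [hcast]; ring
  have hsum : ∑' n, ∫⁻ x, g n x ∂μ ≠ ⊤ := by
    apply ne_top_of_le_ne_top _ (ENNReal.tsum_le_tsum hgint)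
    rw [← ENNReal.ofReal_tsum_of_nonneg (fun n => by positivity)
      (by
        have h2 : Summable (fun n : ℕ => 1 / ((n:ℝ))^2) :=
          Real.summable_one_div_nat_pow.2 (by norm_num)
        have h3 := (summable_nat_add_iff 1).2 h2
        apply h3.congr
        intro n
        push_cast
        ring)]
    exact ENNReal.ofReal_ne_top
  have hae : ∀ᵐ x ∂μ, ∑' n, g n x < ⊤ := by
    apply ae_lt_top (by measurability)
    rw [lintegral_tsum (fun n => (hgmeas n).aemeasurable)]
    exact hsum
  filter_upwards [hae] with x hx
  have hsum2 : Summable fun n => (A n x)^2 := by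
    have := ENNReal.summable_toReal hx.ne
    convert this using 1
    funext n
    rw [hg]
    simp only
    rw [ENNReal.toReal_ofReal (sq_nonneg _)]
  have hsq0 : Tendsto (fun n => (A n x)^2) atTop (nhds 0) := hsum2.tendsto_atTop_zero
  have habs : Tendsto (fun n => |A n x|) atTop (nhds 0) := by
    have hc : Tendsto Real.sqrt (nhds 0) (nhds 0) := by
      have := Real.continuous_sqrt.tendsto 0
      simpa using this
    have := hc.comp hsq0
    convert this using 1
    funext n
    simp [Function.comp, Real.sqrt_sq_eq_abs]
  exact (tendsto_zero_iff_abs_tendsto_zero (fun n => A n x)).2 habs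

end Rule

/-- Deterministic gap-filling. -/
lemma tendsto_div_of_sq (d : ℕ → ℝ) (hd : ∀ i, |d i| ≤ 1)
    (hsq : Tendsto (fun n : ℕ =>
        (∑ i ∈ Finset.range ((n+1)^2), d i) / ((n+1)^2 : ℝ)) atTop (nhds 0)) :
    Tendsto (fun m : ℕ => (∑ i ∈ Finset.range m, d i) / (m : ℝ)) atTop (nhds 0) := by
  set u : ℕ → ℝ := fun m => ∑ i ∈ Finset.range m, d i with hu
  set v : ℕ → ℝ := fun q => |u (q^2)| / ((q:ℝ))^2 with hv
  have hvlim : Tendsto v atTop (nhds 0) := by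
    rw [← Filter.tendsto_add_atTop_iff_nat 1]
    have habs := (tendsto_zero_iff_abs_tendsto_zero _).1 hsq
    apply habs.congr
    intro n
    show |(∑ i ∈ Finset.range ((n+1)^2), d i) / ((n:ℝ)+1)^2| = v (n+1)
    rw [hv]
    simp only
    rw [abs_div, abs_of_nonneg (by positivity : (0:ℝ) ≤ ((n:ℝ)+1)^2)]
    congr 1
    push_cast
    ring
  have hwlim : Tendsto (fun q : ℕ => 2 / (q:ℝ)) atTop (nhds 0) :=
    tendsto_const_div_atTop_nhds_zero_nat 2
  have hsqrt : Tendsto Nat.sqrt atTop atTop := by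
    apply tendsto_atTop_atTop.2
    intro b
    refine ⟨b^2, fun m hm => ?_⟩
    have h1 := Nat.sqrt_le_sqrt hm
    rwa [show (b^2).sqrt = b by rw [sq]; exact Nat.sqrt_eq b] at h1
  have hblim : Tendsto (fun m : ℕ => v (Nat.sqrt m) + 2 / ((Nat.sqrt m : ℕ):ℝ))
      atTop (nhds 0) := by
    have := (hvlim.comp hsqrt).add (hwlim.comp hsqrt)
    simpa using this
  apply squeeze_zero_norm' _ hblim
  filter_upwards [eventually_ge_atTop 1] with m hm
  set q := Nat.sqrt m with hq
  have hq1 : 1 ≤ q := Nat.sqrt_pos.2 (by omega)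
  have hq2 : q^2 ≤ m := by rw [sq]; exact Nat.sqrt_le m
  have hq3 : m ≤ q^2 + 2*q := by
    have := Nat.lt_succ_sqrt m
    rw [← hq] at this
    nlinarith
  set Q : ℝ := (q:ℝ) with hQ
  set M : ℝ := (m:ℝ) with hM
  have hQ1 : (1:ℝ) ≤ Q := by rw [hQ]; exact_mod_cast hq1
  have hQM : Q^2 ≤ M := by rw [hQ, hM]; exact_mod_cast hq2
  have hM2 : M ≤ Q^2 + 2*Q := by rw [hQ, hM]; exact_mod_cast hq3
  have hQpos : (0:ℝ) < Q := by linarith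
  have hQ2pos : (0:ℝ) < Q^2 := by positivity
  have hMpos : (0:ℝ) < M := by linarith
  have hsub : |u m - u (q^2)| ≤ M - Q^2 := by
    rw [hu]
    simp only
    rw [← Finset.sum_Ico_eq_sub d hq2]
    calc |∑ i ∈ Finset.Ico (q^2) m, d i| ≤ ∑ i ∈ Finset.Ico (q^2) m, |d i| :=
        Finset.abs_sum_le_sum_abs _ _
      _ ≤ ∑ _i ∈ Finset.Ico (q^2) m, (1:ℝ) := Finset.sum_le_sum fun i _ => hd i
      _ = ((m - q^2 : ℕ) : ℝ) := by rw [Finset.sum_const, Nat.card_Ico]; simp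
      _ = M - Q^2 := by rw [Nat.cast_sub hq2, hM, hQ]; push_cast; ring
  have htri : |u m| ≤ |u (q^2)| + (M - Q^2) := by
    have := abs_sub_abs_le_abs_sub (u m) (u (q^2))
    have h2 := abs_sub (u m) (u (q^2))
    calc |u m| = |u (q^2) + (u m - u (q^2))| := by ring_nf
      _ ≤ |u (q^2)| + |u m - u (q^2)| := abs_add_le _ _
      _ ≤ |u (q^2)| + (M - Q^2) := by linarith
  have hnorm : ‖u m / M‖ = |u m| / M := by
    rw [Real.norm_eq_abs, abs_div, abs_of_nonneg hMpos.le]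
  show ‖u m / M‖ ≤ v (Nat.sqrt m) + 2 / ((Nat.sqrt m : ℕ):ℝ)
  rw [hnorm]
  have hvq : v q = |u (q^2)| / Q^2 := rfl
  calc |u m| / M ≤ (|u (q^2)| + (M - Q^2)) / M :=
      (div_le_div_iff_of_pos_right hMpos).2 htri
    _ = |u (q^2)| / M + (M - Q^2) / M := add_div _ _ _
    _ ≤ |u (q^2)| / Q^2 + (M - Q^2) / M := by
        have := div_le_div_of_nonneg_left (abs_nonneg (u (q^2))) hQ2pos hQM
        linarith
    _ ≤ |u (q^2)| / Q^2 + (2*Q) / M := by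
        have h4 : (M - Q^2) / M ≤ (2*Q) / M :=
          (div_le_div_iff_of_pos_right hMpos).2 (by linarith)
        linarith
    _ ≤ |u (q^2)| / Q^2 + (2*Q) / Q^2 := by
        have := div_le_div_of_nonneg_left (by linarith : (0:ℝ) ≤ 2*Q) hQ2pos hQM
        linarith
    _ = v q + 2 / Q := by
        rw [hvq, pow_two Q, mul_div_mul_right _ _ hQpos.ne']
    _ = v (Nat.sqrt m) + 2 / ((Nat.sqrt m : ℕ):ℝ) := rfl

lemma ae_tendsto_avg (s : List Bool → Bool) (hp0 : 0 < p) (hp1 : p < 1) :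
    ∀ᵐ x ∂(volume.restrict (Ico (0:ℝ) 1)),
      Tendsto (fun m : ℕ =>
        (∑ i ∈ Finset.range m, D s p i (bits p x)) / (m : ℝ)) atTop (nhds 0) := by
  filter_upwards [ae_tendsto_sq s hp0 hp1] with x hx
  exact tendsto_div_of_sq (fun i => D s p i (bits p x))
    (fun i => abs_D_le s hp0 hp1 i (bits p x)) hx

/-- Pointwise consequence: the average law implies requirement II. -/
lemma satisfies_of_tendsto (s : List Bool → Bool) (ω : ℕ → Bool)
    (hω : Tendsto (fun m : ℕ =>
        (∑ i ∈ Finset.range m, D s p i ω) / (m : ℝ)) atTop (nhds 0)) :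
    SatisfiesII s ω p := by
  by_cases hfin : (SelectedIndices s ω).Finite
  · exact Or.inl hfin
  right
  have hinf : {j : ℕ | s (prefixFn ω j) = true}.Infinite := hfin
  have hD : ∀ i, D s p i ω = (if SelectedSeq s ω i then (1:ℝ) else 0) - p := by
    intro i
    have hex : ∃ k, s (prefixFn ω k) = true ∧
        Nat.count (fun j => s (prefixFn ω j) = true) k = i :=
      ⟨Nat.nth (fun j => s (prefixFn ω j) = true) i,
        Nat.nth_mem_of_infinite hinf i, Nat.count_nth_of_infinite hinf i⟩
    rw [D, dif_pos hex]
    have hfind := Nat.find_spec hex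
    have hnth : Nat.find hex = Nat.nth (fun j => s (prefixFn ω j) = true) i := by
      conv_rhs => rw [← hfind.2]
      exact (Nat.nth_count hfind.1).symm
    rw [hnth]
    rfl
  have hcard : ∀ N : ℕ,
      (((Finset.range N).filter fun i => SelectedSeq s ω i = true).card : ℝ)
      = (∑ i ∈ Finset.range N, D s p i ω) + N * p := by
    intro N
    have h1 : ∀ i, (if SelectedSeq s ω i = true then (1:ℝ) else 0) = D s p i ω + p :=
      fun i => by rw [hD i]; ring
    rw [Finset.card_filter]
    push_cast
    rw [Finset.sum_congr rfl (fun i _ => h1 i), Finset.sum_add_distrib,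
      Finset.sum_const, Finset.card_range, nsmul_eq_mul]
  rw [LimitFreq]
  have hlim : Tendsto (fun N : ℕ =>
      (∑ i ∈ Finset.range N, D s p i ω) / (N:ℝ) + p) atTop (nhds p) := by
    have := hω.add (tendsto_const_nhds (x := p) (f := atTop (α := ℕ)))
    rwa [zero_add] at this
  apply hlim.congr'
  filter_upwards [eventually_ge_atTop 1] with N hN
  have hN0 : (N:ℝ) ≠ 0 := by positivity
  rw [hcard N]
  field_simp

lemma limitFreq_of_satisfies (ω : ℕ → Bool)
    (h : SatisfiesII (fun _ => true) ω p) : LimitFreq ω p := by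
  classical
  have hsel : SelectedIndices (fun _ => true) ω = Set.univ := by
    ext i; simp [SelectedIndices]
  have hnth : ∀ n, Nat.nth (· ∈ SelectedIndices (fun _ => true) ω) n = n := by
    intro n
    have hmem : n ∈ SelectedIndices (fun _ => true) ω := by rw [hsel]; trivial
    have hcnt : Nat.count (· ∈ SelectedIndices (fun _ => true) ω) n = n := by
      rw [Nat.count_eq_card_filter_range]
      rw [Finset.filter_true_of_mem (fun i _ => by rw [hsel]; trivial)]
      exact Finset.card_range n
    have h2 := Nat.nth_count (p := (· ∈ SelectedIndices (fun _ => true) ω)) hmem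
    rwa [hcnt] at h2
  have hseq : SelectedSeq (fun _ => true) ω = ω := funext fun n => by
    rw [SelectedSeq, hnth]
  cases h with
  | inl hfin =>
    exfalso
    rw [hsel] at hfin
    exact Set.infinite_univ hfin
  | inr hlf => rwa [hseq] at hlf

end Wald

/-- **Wald's theorem.** For every countable family `S` of selection rules and every
`p ∈ (0,1)`, the set of sequences with limit frequency `p` satisfying requirement II
(with limit `p`) for every rule in `S` has the cardinality of the continuum. -/



theorem wald_collectives_continuum (S : Set (List Bool → Bool)) (hS : S.Countable)
    (p : ℝ) (hp0 : 0 < p) (hp1 : p < 1) :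
    Cardinal.mk {ω : ℕ → Bool | LimitFreq ω p ∧ ∀ s ∈ S, SatisfiesII s ω p} =
      Cardinal.continuum := by
  have hcantor : Cardinal.mk (ℕ → Bool) = Cardinal.continuum := by
    rw [← Cardinal.power_def, Cardinal.mk_bool, Cardinal.mk_nat, Cardinal.two_power_aleph0]
  apply le_antisymm
  · calc Cardinal.mk {ω : ℕ → Bool | LimitFreq ω p ∧ ∀ s ∈ S, SatisfiesII s ω p}
        ≤ Cardinal.mk (ℕ → Bool) := Cardinal.mk_set_le _
      _ = Cardinal.continuum := hcantor
  · set μ : Measure ℝ := volume.restrict (Ico (0:ℝ) 1) with hμ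
    set Dset : Set (ℕ → Bool) :=
      {ω : ℕ → Bool | LimitFreq ω p ∧ ∀ s ∈ S, SatisfiesII s ω p} with hDset
    have hae : ∀ᵐ x ∂μ, Wald.bits p x ∈ Dset := by
      have h1 : ∀ᵐ x ∂μ, LimitFreq (Wald.bits p x) p := by
        filter_upwards [Wald.ae_tendsto_avg (fun _ => true) hp0 hp1] with x hx
        exact Wald.limitFreq_of_satisfies _ (Wald.satisfies_of_tendsto _ _ hx)
      have h2 : ∀ᵐ x ∂μ, ∀ s ∈ S, SatisfiesII s (Wald.bits p x) p := by
        rw [MeasureTheory.ae_ball_iff hS]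
        intro s _
        filter_upwards [Wald.ae_tendsto_avg s hp0 hp1] with x hx
        exact Wald.satisfies_of_tendsto s _ hx
      filter_upwards [h1, h2] with x hx1 hx2
      exact ⟨hx1, hx2⟩
    set N : Set ℝ := {x : ℝ | ¬ Wald.bits p x ∈ Dset} with hN
    have hN0 : μ N = 0 := by
      rw [ae_iff] at hae
      exact hae
    have hTm0 : μ (toMeasurable μ N) = 0 := by
      rw [measure_toMeasurable]
      exact hN0
    set E : Set ℝ := Ico (0:ℝ) 1 \ toMeasurable μ N with hE
    have hEm : MeasurableSet E := measurableSet_Ico.diff (measurableSet_toMeasurable μ N)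
    have hEv : volume E = 1 := by
      have h1 : μ E = volume E := by
        rw [hμ, Measure.restrict_apply hEm]
        congr 1
        rw [hE]
        ext x
        simp only [mem_inter_iff, mem_diff, mem_Ico]
        tauto
      have h2 : μ E = 1 := by
        rw [hE, measure_diff_null hTm0, hμ, Measure.restrict_apply measurableSet_Ico,
          Set.inter_self, Real.volume_Ico]
        norm_num
      rw [← h1, h2]
    obtain ⟨K, hKE, hKco, hKv⟩ := hEm.exists_isCompact_lt_add (μ := volume)
      (by rw [hEv]; exact ENNReal.one_ne_top) (ε := 1/2) (by norm_num)
    have hKpos : volume K ≠ 0 := by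
      intro h0
      rw [hEv, h0, zero_add] at hKv
      norm_num at hKv
    have hKunc : ¬ K.Countable := by
      intro hc
      exact hKpos (hc.measure_zero volume)
    obtain ⟨f, hfr, _, hfi⟩ :=
      hKco.isClosed.exists_nat_bool_injection_of_not_countable hKunc
    have hKIco : K ⊆ Ico (0:ℝ) 1 := fun x hx => (hKE hx).1
    have hmem : ∀ β : ℕ → Bool, Wald.bits p (f β) ∈ Dset := by
      intro β
      have hfE : f β ∈ E := hKE (hfr (mem_range_self β))
      rw [hE] at hfE
      have hnot : f β ∉ N := fun hn => hfE.2 (subset_toMeasurable μ N hn)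
      rw [hN] at hnot
      exact not_not.1 hnot
    have hinj : Function.Injective fun β : ℕ → Bool =>
        (⟨Wald.bits p (f β), hmem β⟩ : Dset) := by
      intro β β' hββ'
      apply hfi
      apply Wald.bits_injOn hp0 hp1 (hKIco (hfr (mem_range_self β)))
        (hKIco (hfr (mem_range_self β')))
      exact congrArg Subtype.val hββ'
    calc Cardinal.continuum = Cardinal.mk (ℕ → Bool) := hcantor.symm
      _ ≤ Cardinal.mk Dset := Cardinal.mk_le_of_injective hinj
end

section
/- Ville's theorem: For every countable family S of selection rules there exists a sequence ω : ℕ → Bool such that ω has limit frequency 1/2, ω satisfies requirement II for every selection rule in S with limit 1/2, and for every n the number of indices i < n with ω i = false is at least the number of indices i < n with ω i = true. -/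
open Filter MeasureTheory Set
open scoped ENNReal

set_option maxHeartbeats 1000000

namespace Ville

noncomputable section

open Finset Real

/-- dyadic scale exponent for the drift sequence -/
def ebExp (i : ℕ) : ℕ := Nat.log 2 (i + 2) / 4 + 1

/-- the drift (bias) sequence, `≈ (i+2)^{-1/4}` as a dyadic staircase -/
def eb (i : ℕ) : ℝ := ((2 : ℝ) ^ ebExp i)⁻¹

/-- global discrepancy: #false − #true -/
def Dg (x : List Bool) : ℤ := (x.count false : ℤ) - (x.count true : ℤ)

/-- the bias used at the step following prefix `x`; `1` (forcing a zero) when balanced -/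
def epsAt (x : List Bool) : ℝ := if Dg x = 0 then 1 else eb x.length

/-- discrepancy (#false − #true) of the subsequence of `x` selected by rule `g` -/
def Dr (g : List Bool → Bool) (x : List Bool) : ℤ :=
  ∑ i ∈ Finset.range x.length,
    (if g (x.take i) = true then (if x.getD i false = true then -1 else 1) else 0)

/-- number of positions of `x` selected by `g` -/
def selCount (g : List Bool → Bool) (x : List Bool) : ℕ :=
  ((Finset.range x.length).filter fun i => g (x.take i) = true).card

/-- number of selected positions carrying `true` -/
def selTrue (g : List Bool → Bool) (x : List Bool) : ℕ :=
  ((Finset.range x.length).filter fun i =>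
      g (x.take i) = true ∧ x.getD i false = true).card

def th (m : ℕ) : ℝ := ((2 : ℝ) ^ m)⁻¹
def rho (m : ℕ) : ℝ := 1 + th m
def ch (m : ℕ) : ℝ := (rho m + (rho m)⁻¹) / 2
def sh (m : ℕ) : ℝ := (rho m - (rho m)⁻¹) / 2

/-- budget product for the symmetric term of rule `g` at scale `m` -/
def Bp (g : List Bool → Bool) (m : ℕ) (x : List Bool) : ℝ :=
  ∏ i ∈ (Finset.range x.length).filter (fun i => g (x.take i) = true),
    (ch m + epsAt (x.take i) * sh m)

/-- budget product for the one-sided global term at scale `m` -/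
def Cp (m : ℕ) (x : List Bool) : ℝ :=
  ∏ i ∈ Finset.range x.length, (ch m - epsAt (x.take i) * sh m)

variable (f : ℕ → List Bool → Bool)

def termR (j m : ℕ) (x : List Bool) : ℝ :=
  (((2 : ℝ) ^ (j + m))⁻¹ * (rho m ^ (Dr (f j) x) + rho m ^ (-Dr (f j) x))) / Bp (f j) m x

def termG (m : ℕ) (x : List Bool) : ℝ := (th m * rho m ^ (-Dg x)) / Cp m x

def Phi (x : List Bool) : ℝ :=
  (∑' p : ℕ × ℕ, termR f p.1 p.2 x) + ∑' m : ℕ, termG m x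

def choice (x : List Bool) : Bool :=
  if Dg x = 0 then false else (if Phi f (x ++ [false]) ≤ Phi f x then false else true)

def W : ℕ → List Bool
  | 0 => []
  | n + 1 => W n ++ [choice f (W n)]

def om (n : ℕ) : Bool := choice f (W f n)

/-! ### basic parameter facts -/

lemma th_pos (m : ℕ) : 0 < th m := by simp only [th]; positivity
lemma th_le_one (m : ℕ) : th m ≤ 1 := by
  rw [th]; rw [inv_le_one_iff₀]; right; exact one_le_pow₀ (by norm_num)
lemma rho_gt_one (m : ℕ) : 1 < rho m := by have := th_pos m; simp [rho]; linarith
lemma rho_pos (m : ℕ) : 0 < rho m := lt_trans one_pos (rho_gt_one m)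
lemma rho_le_two (m : ℕ) : rho m ≤ 2 := by have := th_le_one m; simp [rho]; linarith
lemma rho_mul_inv (m : ℕ) : rho m * (rho m)⁻¹ = 1 := mul_inv_cancel₀ (ne_of_gt (rho_pos m))

lemma sh_le_th (m : ℕ) : sh m ≤ th m := by
  have h1 := rho_mul_inv m; have h2 := rho_pos m; have h3 := th_pos m
  have h4 : rho m = 1 + th m := rfl
  rw [sh, div_le_iff₀ (by norm_num : (0:ℝ) < 2)]
  nlinarith [inv_pos.mpr h2, sq_nonneg (th m)]
lemma th_half_le_sh (m : ℕ) : th m / 2 ≤ sh m := by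
  have h1 := rho_mul_inv m; have h2 := rho_pos m; have h3 := th_pos m
  have h4 : rho m = 1 + th m := rfl
  rw [sh, div_le_div_iff_of_pos_right (by norm_num : (0:ℝ) < 2)]
  nlinarith [inv_pos.mpr h2, sq_nonneg (th m)]
lemma ch_ge_one (m : ℕ) : 1 ≤ ch m := by
  have h1 := rho_mul_inv m; have h2 := rho_pos m; have h3 := rho_gt_one m
  rw [ch, le_div_iff₀ (by norm_num : (0:ℝ) < 2)]
  nlinarith [inv_pos.mpr h2, sq_nonneg (rho m - 1)]
lemma ch_le (m : ℕ) : ch m ≤ 1 + th m ^ 2 / 2 := by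
  have h1 := rho_mul_inv m; have h2 := rho_pos m; have h3 := th_pos m
  have h4 : rho m = 1 + th m := rfl
  rw [ch, div_le_iff₀ (by norm_num : (0:ℝ) < 2)]
  nlinarith [inv_pos.mpr h2, sq_nonneg (th m)]
lemma ch_sub_sh (m : ℕ) : ch m - sh m = (rho m)⁻¹ := by rw [ch, sh]; ring
lemma ch_sub_sh_pos (m : ℕ) : 0 < ch m - sh m := by
  rw [ch_sub_sh]; exact inv_pos.mpr (rho_pos m)
lemma sh_nonneg (m : ℕ) : 0 ≤ sh m := le_trans (by have := th_pos m; linarith) (th_half_le_sh m)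

lemma eb_pos (i : ℕ) : 0 < eb i := by simp only [eb]; positivity
lemma eb_le_half (i : ℕ) : eb i ≤ 1 / 2 := by
  rw [eb]
  rw [inv_le_comm₀ (by positivity) (by norm_num)]
  calc (1/2 : ℝ)⁻¹ = 2^1 := by norm_num
  _ ≤ 2 ^ ebExp i := by
      apply pow_le_pow_right₀ (by norm_num)
      simp [ebExp]
lemma eb_antitone : Antitone eb := by
  intro i j hij
  rw [eb, eb]
  apply inv_anti₀ (by positivity)
  apply pow_le_pow_right₀ (by norm_num)
  simp only [ebExp]
  have := Nat.log_mono_right (b := 2) (by omega : i + 2 ≤ j + 2)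
  omega

lemma epsAt_pos (x : List Bool) : 0 < epsAt x := by
  rw [epsAt]; split
  · norm_num
  · exact eb_pos _
lemma epsAt_le_one (x : List Bool) : epsAt x ≤ 1 := by
  rw [epsAt]; split
  · exact le_refl 1
  · linarith [eb_le_half x.length]

/-! ### append lemmas -/

lemma Dg_append (x : List Bool) (b : Bool) :
    Dg (x ++ [b]) = Dg x + (if b = true then -1 else 1) := by
  rw [Dg, Dg, List.count_append, List.count_append]
  cases b <;> simp [List.count_singleton] <;> push_cast <;> ring

lemma take_app (x : List Bool) (b : Bool) {i : ℕ} (h : i ≤ x.length) :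
    (x ++ [b]).take i = x.take i :=
  List.take_append_of_le_length h

lemma take_app_len (x : List Bool) (b : Bool) : (x ++ [b]).take x.length = x := by
  rw [take_app x b (le_refl _), List.take_length]

lemma getD_app (x : List Bool) (b : Bool) {i : ℕ} (h : i < x.length) :
    (x ++ [b]).getD i false = x.getD i false :=
  List.getD_append _ _ _ _ h

lemma getD_app_len (x : List Bool) (b : Bool) :
    (x ++ [b]).getD x.length false = b := by
  rw [List.getD_append_right _ _ _ _ (le_refl _)]
  simp

lemma len_app (x : List Bool) (b : Bool) : (x ++ [b]).length = x.length + 1 := by simp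

lemma Dr_append (g : List Bool → Bool) (x : List Bool) (b : Bool) :
    Dr g (x ++ [b]) = Dr g x + (if g x = true then (if b = true then -1 else 1) else 0) := by
  rw [Dr, Dr, len_app, Finset.sum_range_succ]
  congr 1
  · apply Finset.sum_congr rfl
    intro i hi
    rw [Finset.mem_range] at hi
    rw [take_app x b (le_of_lt hi), getD_app x b hi]
  · rw [take_app_len, getD_app_len]

lemma filter_sel_append (g : List Bool → Bool) (x : List Bool) (b : Bool) :
    (Finset.range (x ++ [b]).length).filter (fun i => g ((x ++ [b]).take i) = true)
      = if g x = true then insert x.length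
          ((Finset.range x.length).filter (fun i => g (x.take i) = true))
        else (Finset.range x.length).filter (fun i => g (x.take i) = true) := by
  classical
  rw [len_app, Finset.range_add_one, Finset.filter_insert, take_app_len]
  have hc : (Finset.range x.length).filter (fun i => g ((x ++ [b]).take i) = true)
      = (Finset.range x.length).filter (fun i => g (x.take i) = true) := by
    apply Finset.filter_congr
    intro i hi
    rw [Finset.mem_range] at hi
    rw [take_app x b (le_of_lt hi)]
  rw [hc]

lemma length_not_mem_filter (g : List Bool → Bool) (x : List Bool) :
    x.length ∉ (Finset.range x.length).filter (fun i => g (x.take i) = true) := by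
  simp [Finset.mem_filter]

lemma selCount_append (g : List Bool → Bool) (x : List Bool) (b : Bool) :
    selCount g (x ++ [b]) = selCount g x + (if g x = true then 1 else 0) := by
  classical
  rw [selCount, selCount, filter_sel_append]
  split_ifs with h
  · rw [Finset.card_insert_of_notMem (length_not_mem_filter g x)]
  · simp

lemma Bp_append (g : List Bool → Bool) (m : ℕ) (x : List Bool) (b : Bool) :
    Bp g m (x ++ [b]) = Bp g m x * (if g x = true then ch m + epsAt x * sh m else 1) := by
  classical
  rw [Bp, Bp, filter_sel_append]
  have hc : ∀ s : Finset ℕ, (∀ i ∈ s, i < x.length) →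
      (∏ i ∈ s, (ch m + epsAt ((x ++ [b]).take i) * sh m))
        = ∏ i ∈ s, (ch m + epsAt (x.take i) * sh m) := by
    intro s hs
    apply Finset.prod_congr rfl
    intro i hi
    rw [take_app x b (le_of_lt (hs i hi))]
  split_ifs with h
  · rw [Finset.prod_insert (length_not_mem_filter g x), take_app_len,
      hc _ (fun i hi => Finset.mem_range.mp (Finset.mem_filter.mp hi).1)]
    ring
  · rw [hc _ (fun i hi => Finset.mem_range.mp (Finset.mem_filter.mp hi).1)]
    ring

lemma Cp_append (m : ℕ) (x : List Bool) (b : Bool) :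
    Cp m (x ++ [b]) = Cp m x * (ch m - epsAt x * sh m) := by
  rw [Cp, Cp, len_app, Finset.prod_range_succ, take_app_len]
  congr 1
  apply Finset.prod_congr rfl
  intro i hi
  rw [Finset.mem_range] at hi
  rw [take_app x b (le_of_lt hi)]

/-! ### positivity of the potential pieces -/

lemma factorB_ge_one (m : ℕ) (y : List Bool) : 1 ≤ ch m + epsAt y * sh m := by
  have h1 := ch_ge_one m
  have h2 := epsAt_pos y
  have h3 := sh_nonneg m
  nlinarith

lemma factorC_pos (m : ℕ) (y : List Bool) : 0 < ch m - epsAt y * sh m := by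
  have h1 := ch_sub_sh_pos m
  have h2 := epsAt_le_one y
  have h3 := sh_nonneg m
  nlinarith

lemma factorC_ge_half (m : ℕ) (y : List Bool) : 2⁻¹ ≤ ch m - epsAt y * sh m := by
  have h1 := ch_sub_sh m
  have h2 := epsAt_le_one y
  have h3 := sh_nonneg m
  have h4 : (2:ℝ)⁻¹ ≤ (rho m)⁻¹ := by
    apply inv_anti₀ (rho_pos m) (rho_le_two m)
  nlinarith

lemma Bp_ge_one (g : List Bool → Bool) (m : ℕ) (x : List Bool) : 1 ≤ Bp g m x := by
  rw [Bp]
  calc (1:ℝ) = ∏ _i ∈ (Finset.range x.length).filter (fun i => g (x.take i) = true),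
      (1:ℝ) := by rw [Finset.prod_const_one]
  _ ≤ _ := Finset.prod_le_prod (fun i _ => by norm_num)
      (fun i _ => factorB_ge_one m _)
lemma Cp_pos (m : ℕ) (x : List Bool) : 0 < Cp m x := by
  rw [Cp]
  apply Finset.prod_pos
  intro i _
  exact factorC_pos m _

lemma Cp_ge (m : ℕ) (x : List Bool) : (2:ℝ)⁻¹ ^ x.length ≤ Cp m x := by
  rw [Cp]
  calc (2:ℝ)⁻¹ ^ x.length = ∏ _i ∈ Finset.range x.length, (2:ℝ)⁻¹ := by
        rw [Finset.prod_const, Finset.card_range]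
  _ ≤ _ := Finset.prod_le_prod (fun i _ => by norm_num)
        (fun i _ => factorC_ge_half m _)
lemma termR_nonneg (j m : ℕ) (x : List Bool) : 0 ≤ termR f j m x := by
  rw [termR]
  have h1 := rho_pos m
  have h2 : (0:ℝ) < Bp (f j) m x := lt_of_lt_of_le one_pos (Bp_ge_one (f j) m x)
  positivity
lemma termG_nonneg (m : ℕ) (x : List Bool) : 0 ≤ termG m x := by
  rw [termG]
  have h1 := rho_pos m
  have h2 := Cp_pos m x
  have h3 := th_pos m
  positivity

lemma abs_Dr_le (g : List Bool → Bool) (x : List Bool) : |Dr g x| ≤ (x.length : ℤ) := by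
  rw [Dr]
  calc |∑ i ∈ Finset.range x.length,
      (if g (x.take i) = true then (if x.getD i false = true then (-1:ℤ) else 1) else 0)|
      ≤ ∑ i ∈ Finset.range x.length,
        |(if g (x.take i) = true then (if x.getD i false = true then (-1:ℤ) else 1) else 0)| :=
        Finset.abs_sum_le_sum_abs _ _
  _ ≤ ∑ _i ∈ Finset.range x.length, 1 := by
        apply Finset.sum_le_sum
        intro i _
        split_ifs <;> simp
  _ = (x.length : ℤ) := by simp

lemma abs_Dg_le (x : List Bool) : |Dg x| ≤ (x.length : ℤ) := by
  rw [Dg]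
  have h1 := List.count_le_length (a := false) (l := x)
  have h2 := List.count_le_length (a := true) (l := x)
  rw [abs_le]
  constructor <;> [skip; skip] <;>
    · push_cast
      omega

lemma zpow_le_pow_len (m : ℕ) (d : ℤ) (n : ℕ) (h : d ≤ (n:ℤ)) :
    rho m ^ d ≤ 2 ^ n := by
  calc rho m ^ d ≤ rho m ^ (n : ℤ) :=
        zpow_le_zpow_right₀ (le_of_lt (rho_gt_one m)) h
  _ = rho m ^ n := zpow_natCast _ _
  _ ≤ 2 ^ n := pow_le_pow_left₀ (le_of_lt (rho_pos m)) (rho_le_two m) n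

lemma termR_le_bound (j m : ℕ) (x : List Bool) :
    termR f j m x ≤ ((2:ℝ)⁻¹) ^ j * ((2:ℝ)⁻¹) ^ m * (2 * 2 ^ x.length) := by
  have habs := abs_Dr_le (f j) x
  have h1 : rho m ^ (Dr (f j) x) ≤ 2 ^ x.length :=
    zpow_le_pow_len m _ _ (le_trans (le_abs_self _) habs)
  have h2 : rho m ^ (-Dr (f j) x) ≤ 2 ^ x.length :=
    zpow_le_pow_len m _ _ (le_trans (neg_le_abs _) habs)
  have hB := Bp_ge_one (f j) m x
  have hw : (0:ℝ) < ((2:ℝ) ^ (j + m))⁻¹ := by positivity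
  have hnum : ((2:ℝ) ^ (j + m))⁻¹ * (rho m ^ (Dr (f j) x) + rho m ^ (-Dr (f j) x))
      ≤ ((2:ℝ) ^ (j + m))⁻¹ * (2 * 2 ^ x.length) := by
    apply mul_le_mul_of_nonneg_left _ (le_of_lt hw)
    linarith
  calc termR f j m x ≤ ((2:ℝ) ^ (j + m))⁻¹ * (rho m ^ (Dr (f j) x) + rho m ^ (-Dr (f j) x)) := by
        rw [termR]
        apply div_le_self _ hB
        have := rho_pos m
        positivity
  _ ≤ ((2:ℝ) ^ (j + m))⁻¹ * (2 * 2 ^ x.length) := hnum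
  _ = ((2:ℝ)⁻¹) ^ j * ((2:ℝ)⁻¹) ^ m * (2 * 2 ^ x.length) := by
        rw [pow_add, mul_inv, inv_pow, inv_pow]

lemma summable_geo_half : Summable (fun j : ℕ => ((2:ℝ)⁻¹) ^ j) :=
  summable_geometric_of_lt_one (by norm_num) (by norm_num)

lemma summable_termR (x : List Bool) : Summable (fun p : ℕ × ℕ => termR f p.1 p.2 x) := by
  have hs1 : Summable (fun j : ℕ => ((2:ℝ)⁻¹) ^ j) := summable_geo_half
  have hs2 : Summable (fun m : ℕ => ((2:ℝ)⁻¹) ^ m * (2 * 2 ^ x.length)) :=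
    summable_geo_half.mul_right _
  have hbig := Summable.mul_of_nonneg hs1 hs2 (fun j => by positivity)
    (fun m => by positivity)
  have hbig' : Summable (fun p : ℕ × ℕ => ((2:ℝ)⁻¹) ^ p.1 * ((2:ℝ)⁻¹) ^ p.2 * (2 * 2 ^ x.length)) := by
    apply hbig.congr
    intro p
    ring
  exact Summable.of_nonneg_of_le (fun p => termR_nonneg f p.1 p.2 x)
    (fun p => termR_le_bound f p.1 p.2 x) hbig' 
lemma termG_le_bound (m : ℕ) (x : List Bool) :
    termG m x ≤ ((2:ℝ)⁻¹) ^ m * (2 ^ x.length * 2 ^ x.length) := by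
  have h2 : rho m ^ (-Dg x) ≤ 2 ^ x.length :=
    zpow_le_pow_len m _ _ (le_trans (neg_le_abs _) (abs_Dg_le x))
  have hC := Cp_ge m x
  have hCpos := Cp_pos m x
  have hth := th_pos m
  have hrho := rho_pos m
  rw [termG, div_le_iff₀ hCpos]
  have hth_eq : th m = ((2:ℝ)⁻¹) ^ m := by rw [th, inv_pow]
  have hone : (2:ℝ) ^ x.length * ((2:ℝ)⁻¹) ^ x.length = 1 := by
    rw [← mul_pow]; norm_num
  have hc0 : (0:ℝ) ≤ ((2:ℝ)⁻¹) ^ m * (2 ^ x.length * 2 ^ x.length) := by positivity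
  have h3 := mul_le_mul_of_nonneg_left hC hc0
  calc th m * rho m ^ (-Dg x) ≤ th m * 2 ^ x.length :=
        mul_le_mul_of_nonneg_left h2 (le_of_lt hth)
  _ = ((2:ℝ)⁻¹) ^ m * (2 ^ x.length * 2 ^ x.length) * ((2:ℝ)⁻¹) ^ x.length := by
        rw [hth_eq]
        linear_combination (-(((2:ℝ)⁻¹) ^ m * 2 ^ x.length)) * hone
  _ ≤ ((2:ℝ)⁻¹) ^ m * (2 ^ x.length * 2 ^ x.length) * Cp m x := h3

lemma summable_termG (x : List Bool) : Summable (fun m : ℕ => termG m x) := by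
  apply Summable.of_nonneg_of_le (fun m => termG_nonneg m x)
    (fun m => termG_le_bound m x)
  exact summable_geo_half.mul_right _

lemma Phi_nonneg (x : List Bool) : 0 ≤ Phi f x := by
  rw [Phi]
  apply add_nonneg
  · exact tsum_nonneg (fun p => termR_nonneg f p.1 p.2 x)
  · exact tsum_nonneg (fun m => termG_nonneg m x)

/-! ### the key one-step inequality -/

lemma rho_ne_zero (m : ℕ) : rho m ≠ 0 := ne_of_gt (rho_pos m)

lemma termR_combo (j m : ℕ) (x : List Bool) :
    (1 + epsAt x) / 2 * termR f j m (x ++ [false])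
      + (1 - epsAt x) / 2 * termR f j m (x ++ [true]) ≤ termR f j m x := by
  have hε0 := epsAt_pos x
  have hε1 := epsAt_le_one x
  have hsh := sh_nonneg m
  have hρ := rho_pos m
  by_cases hgx : f j x = true
  · -- selected step
    set ε := epsAt x with hεdef
    set D := Dr (f j) x with hDdef
    set B := Bp (f j) m x with hBdef
    have hB1 : (1:ℝ) ≤ B := Bp_ge_one (f j) m x
    have hBpos : (0:ℝ) < B := lt_of_lt_of_le one_pos hB1
    have hQ1 : (1:ℝ) ≤ ch m + ε * sh m := factorB_ge_one m x
    have hQpos : (0:ℝ) < ch m + ε * sh m := lt_of_lt_of_le one_pos hQ1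
    set a := rho m ^ D with hadef
    set v := rho m ^ (-D) with hvdef
    have ha : (0:ℝ) < a := zpow_pos hρ D
    have hv : (0:ℝ) < v := zpow_pos hρ (-D)
    set w := ((2:ℝ) ^ (j + m))⁻¹ with hwdef
    have hw : (0:ℝ) < w := by rw [hwdef]; positivity
    have hD0 : Dr (f j) (x ++ [false]) = D + 1 := by
      rw [Dr_append, hgx]; simp; exact hDdef.symm
    have hD1 : Dr (f j) (x ++ [true]) = D - 1 := by
      rw [Dr_append, hgx]; simp; ring
    have hBapp : ∀ b, Bp (f j) m (x ++ [b]) = B * (ch m + ε * sh m) := by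
      intro b
      rw [Bp_append, hgx]
      simp; rfl
    have hz0 : rho m ^ (D + 1) = a * rho m := by
      rw [hadef, zpow_add_one₀ (rho_ne_zero m)]
    have hz0' : rho m ^ (-(D + 1)) = v * (rho m)⁻¹ := by
      rw [hvdef, show -(D + 1) = -D + (-1) by ring, zpow_add₀ (rho_ne_zero m), zpow_neg_one]
    have hz1 : rho m ^ (D - 1) = a * (rho m)⁻¹ := by
      rw [hadef, show D - 1 = D + (-1) by ring, zpow_add₀ (rho_ne_zero m), zpow_neg_one]
    have hz1' : rho m ^ (-(D - 1)) = v * rho m := by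
      rw [hvdef, show -(D - 1) = -D + 1 by ring, zpow_add₀ (rho_ne_zero m), zpow_one]
    have e0 : termR f j m (x ++ [false]) = (w * (a * rho m + v * (rho m)⁻¹)) / (B * (ch m + ε * sh m)) := by
      rw [termR, hD0, hBapp, hz0, hz0']
    have e1 : termR f j m (x ++ [true]) = (w * (a * (rho m)⁻¹ + v * rho m)) / (B * (ch m + ε * sh m)) := by
      rw [termR, hD1, hBapp, hz1, hz1']
    have key : (1 + ε) / 2 * (a * rho m + v * (rho m)⁻¹)
        + (1 - ε) / 2 * (a * (rho m)⁻¹ + v * rho m) ≤ (a + v) * (ch m + ε * sh m) := by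
      have hdiff : (a + v) * (ch m + ε * sh m)
          - ((1 + ε) / 2 * (a * rho m + v * (rho m)⁻¹)
            + (1 - ε) / 2 * (a * (rho m)⁻¹ + v * rho m)) = 2 * ε * sh m * v := by
        rw [ch, sh]; ring
      nlinarith [mul_nonneg (mul_nonneg (le_of_lt hε0) hsh) (le_of_lt hv)]
    calc (1 + ε) / 2 * termR f j m (x ++ [false]) + (1 - ε) / 2 * termR f j m (x ++ [true])
        = (w * ((1 + ε) / 2 * (a * rho m + v * (rho m)⁻¹)
            + (1 - ε) / 2 * (a * (rho m)⁻¹ + v * rho m))) / (B * (ch m + ε * sh m)) := by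
          rw [e0, e1]; ring
    _ ≤ (w * ((a + v) * (ch m + ε * sh m))) / (B * (ch m + ε * sh m)) := by
          have hnum := mul_le_mul_of_nonneg_left key (le_of_lt hw)
          rw [div_eq_mul_inv, div_eq_mul_inv]
          exact mul_le_mul_of_nonneg_right hnum (by positivity)
    _ = (w * (a + v)) / B := by
          rw [show w * ((a + v) * (ch m + ε * sh m)) = (w * (a + v)) * (ch m + ε * sh m) by ring,
            mul_div_mul_right _ _ (ne_of_gt hQpos)]
    _ = termR f j m x := by rw [termR]
  · -- unselected step : nothing changes
    have hD : ∀ b, Dr (f j) (x ++ [b]) = Dr (f j) x := by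
      intro b
      rw [Dr_append]
      simp [hgx]
    have hB : ∀ b, Bp (f j) m (x ++ [b]) = Bp (f j) m x := by
      intro b
      rw [Bp_append]
      simp [hgx]
    have e : ∀ b, termR f j m (x ++ [b]) = termR f j m x := by
      intro b
      rw [termR, hD, hB, termR]
    rw [e false, e true]
    have : (1 + epsAt x) / 2 + (1 - epsAt x) / 2 = 1 := by ring
    nlinarith [termR_nonneg f j m x]

lemma termG_combo (m : ℕ) (x : List Bool) :
    (1 + epsAt x) / 2 * termG m (x ++ [false])
      + (1 - epsAt x) / 2 * termG m (x ++ [true]) ≤ termG m x := by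
  have hε0 := epsAt_pos x
  have hρ := rho_pos m
  set ε := epsAt x with hεdef
  set D := Dg x with hDdef
  set C := Cp m x with hCdef
  have hCpos : (0:ℝ) < C := Cp_pos m x
  have hQpos : (0:ℝ) < ch m - ε * sh m := factorC_pos m x
  set v := rho m ^ (-D) with hvdef
  have hv : (0:ℝ) < v := zpow_pos hρ (-D)
  have hth := th_pos m
  have hD0 : Dg (x ++ [false]) = D + 1 := by rw [Dg_append]; simp; exact hDdef.symm
  have hD1 : Dg (x ++ [true]) = D - 1 := by rw [Dg_append]; simp; ring
  have hCapp : ∀ b, Cp m (x ++ [b]) = C * (ch m - ε * sh m) := fun b => Cp_append m x b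
  have hz0 : rho m ^ (-(D + 1)) = v * (rho m)⁻¹ := by
    rw [hvdef, show -(D + 1) = -D + (-1) by ring, zpow_add₀ (rho_ne_zero m), zpow_neg_one]
  have hz1 : rho m ^ (-(D - 1)) = v * rho m := by
    rw [hvdef, show -(D - 1) = -D + 1 by ring, zpow_add₀ (rho_ne_zero m), zpow_one]
  have e0 : termG m (x ++ [false]) = (th m * (v * (rho m)⁻¹)) / (C * (ch m - ε * sh m)) := by
    rw [termG, hD0, hCapp, hz0]
  have e1 : termG m (x ++ [true]) = (th m * (v * rho m)) / (C * (ch m - ε * sh m)) := by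
    rw [termG, hD1, hCapp, hz1]
  have key : (1 + ε) / 2 * (th m * (v * (rho m)⁻¹)) + (1 - ε) / 2 * (th m * (v * rho m))
      = (th m * v) * (ch m - ε * sh m) := by
    rw [ch, sh]; ring
  calc (1 + ε) / 2 * termG m (x ++ [false]) + (1 - ε) / 2 * termG m (x ++ [true])
      = ((1 + ε) / 2 * (th m * (v * (rho m)⁻¹)) + (1 - ε) / 2 * (th m * (v * rho m)))
          / (C * (ch m - ε * sh m)) := by rw [e0, e1]; ring
  _ = ((th m * v) * (ch m - ε * sh m)) / (C * (ch m - ε * sh m)) := by rw [key]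
  _ = (th m * v) / C := mul_div_mul_right _ _ (ne_of_gt hQpos)
  _ = termG m x := by rw [termG]
  _ ≤ termG m x := le_refl _

lemma combo_le (x : List Bool) :
    (1 + epsAt x) / 2 * Phi f (x ++ [false]) + (1 - epsAt x) / 2 * Phi f (x ++ [true])
      ≤ Phi f x := by
  have hε0 := epsAt_pos x
  have hε1 := epsAt_le_one x
  have c0 : (0:ℝ) ≤ (1 + epsAt x) / 2 := by linarith
  have c1 : (0:ℝ) ≤ (1 - epsAt x) / 2 := by linarith
  have hR0 := summable_termR f (x ++ [false])
  have hR1 := summable_termR f (x ++ [true])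
  have hRx := summable_termR f x
  have hG0 := summable_termG (x ++ [false])
  have hG1 := summable_termG (x ++ [true])
  have hGx := summable_termG x
  have hRcombo : Summable (fun p : ℕ × ℕ => (1 + epsAt x) / 2 * termR f p.1 p.2 (x ++ [false])
      + (1 - epsAt x) / 2 * termR f p.1 p.2 (x ++ [true])) :=
    (hR0.mul_left _).add (hR1.mul_left _)
  have hGcombo : Summable (fun m : ℕ => (1 + epsAt x) / 2 * termG m (x ++ [false])
      + (1 - epsAt x) / 2 * termG m (x ++ [true])) :=
    (hG0.mul_left _).add (hG1.mul_left _)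
  have hRle : ∑' p : ℕ × ℕ, ((1 + epsAt x) / 2 * termR f p.1 p.2 (x ++ [false])
      + (1 - epsAt x) / 2 * termR f p.1 p.2 (x ++ [true]))
      ≤ ∑' p : ℕ × ℕ, termR f p.1 p.2 x :=
    Summable.tsum_le_tsum (fun p => termR_combo f p.1 p.2 x) hRcombo hRx
  have hGle : ∑' m : ℕ, ((1 + epsAt x) / 2 * termG m (x ++ [false])
      + (1 - epsAt x) / 2 * termG m (x ++ [true]))
      ≤ ∑' m : ℕ, termG m x :=
    Summable.tsum_le_tsum (fun m => termG_combo m x) hGcombo hGx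
  have hRsplit : ∑' p : ℕ × ℕ, ((1 + epsAt x) / 2 * termR f p.1 p.2 (x ++ [false])
      + (1 - epsAt x) / 2 * termR f p.1 p.2 (x ++ [true]))
      = (1 + epsAt x) / 2 * ∑' p : ℕ × ℕ, termR f p.1 p.2 (x ++ [false])
        + (1 - epsAt x) / 2 * ∑' p : ℕ × ℕ, termR f p.1 p.2 (x ++ [true]) := by
    rw [Summable.tsum_add (hR0.mul_left _) (hR1.mul_left _), tsum_mul_left, tsum_mul_left]
  have hGsplit : ∑' m : ℕ, ((1 + epsAt x) / 2 * termG m (x ++ [false])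
      + (1 - epsAt x) / 2 * termG m (x ++ [true]))
      = (1 + epsAt x) / 2 * ∑' m : ℕ, termG m (x ++ [false])
        + (1 - epsAt x) / 2 * ∑' m : ℕ, termG m (x ++ [true]) := by
    rw [Summable.tsum_add (hG0.mul_left _) (hG1.mul_left _), tsum_mul_left, tsum_mul_left]
  rw [Phi, Phi, Phi]
  rw [hRsplit] at hRle
  rw [hGsplit] at hGle
  linarith

lemma Phi_step (x : List Bool) : Phi f (x ++ [choice f x]) ≤ Phi f x := by
  have hcombo := combo_le f x
  have hP0 := Phi_nonneg f (x ++ [false])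
  have hP1 := Phi_nonneg f (x ++ [true])
  rw [choice]
  by_cases hforced : Dg x = 0
  · rw [if_pos hforced]
    have hε : epsAt x = 1 := by rw [epsAt, if_pos hforced]
    rw [hε] at hcombo
    norm_num at hcombo
    exact hcombo
  · rw [if_neg hforced]
    have hε : epsAt x = eb x.length := by rw [epsAt, if_neg hforced]
    have hεlt : epsAt x < 1 := by
      rw [hε]
      linarith [eb_le_half x.length]
    have hε0 := epsAt_pos x
    by_cases hle : Phi f (x ++ [false]) ≤ Phi f x
    · rw [if_pos hle]
      exact hle
    · rw [if_neg hle]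
      push_neg at hle
      nlinarith

lemma tsum_geo_half : ∑' m : ℕ, ((2:ℝ)⁻¹) ^ m = 2 := by
  rw [tsum_geometric_of_lt_one (by norm_num) (by norm_num)]
  norm_num

lemma Phi_nil_le : Phi f [] ≤ 10 := by
  have hR : ∀ j m : ℕ, termR f j m [] = 2 * (((2:ℝ)⁻¹) ^ j * ((2:ℝ)⁻¹) ^ m) := by
    intro j m
    rw [termR]
    have h1 : Dr (f j) [] = 0 := by simp [Dr]
    have h2 : Bp (f j) m [] = 1 := by simp [Bp]
    rw [h1, h2]
    simp [pow_add, mul_inv, inv_pow]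
    ring
  have hG : ∀ m : ℕ, termG m [] = ((2:ℝ)⁻¹) ^ m := by
    intro m
    rw [termG]
    have h1 : Dg ([] : List Bool) = 0 := by simp [Dg]
    have h2 : Cp m [] = 1 := by simp [Cp]
    rw [h1, h2, th, inv_pow]
    simp
  have hRsum : ∑' p : ℕ × ℕ, termR f p.1 p.2 [] = 8 := by
    have hsummable : Summable (fun p : ℕ × ℕ => 2 * (((2:ℝ)⁻¹) ^ p.1 * ((2:ℝ)⁻¹) ^ p.2)) := by
      have := (summable_termR f ([] : List Bool))
      apply this.congr
      intro p
      rw [hR p.1 p.2]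
    calc ∑' p : ℕ × ℕ, termR f p.1 p.2 []
        = ∑' p : ℕ × ℕ, 2 * (((2:ℝ)⁻¹) ^ p.1 * ((2:ℝ)⁻¹) ^ p.2) := by
          apply tsum_congr
          intro p
          exact hR p.1 p.2
    _ = ∑' j : ℕ, ∑' m : ℕ, 2 * (((2:ℝ)⁻¹) ^ j * ((2:ℝ)⁻¹) ^ m) := by
          apply Summable.tsum_prod' hsummable
          intro j
          have hs : Summable (fun m : ℕ => (2 * ((2:ℝ)⁻¹) ^ j) * ((2:ℝ)⁻¹) ^ m) :=
            summable_geo_half.mul_left _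
          exact hs.congr (fun m => by ring)
    _ = ∑' j : ℕ, 2 * ((2:ℝ)⁻¹) ^ j * 2 := by
          apply tsum_congr
          intro j
          have : ∀ m : ℕ, 2 * (((2:ℝ)⁻¹) ^ j * ((2:ℝ)⁻¹) ^ m)
              = (2 * ((2:ℝ)⁻¹) ^ j) * ((2:ℝ)⁻¹) ^ m := by intro m; ring
          rw [tsum_congr this, tsum_mul_left, tsum_geo_half]
          try ring
    _ = 8 := by
          have : ∀ j : ℕ, 2 * ((2:ℝ)⁻¹) ^ j * 2 = 4 * ((2:ℝ)⁻¹) ^ j := by intro j; ring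
          rw [tsum_congr this, tsum_mul_left, tsum_geo_half]
          try norm_num
  have hGsum : ∑' m : ℕ, termG m [] = 2 := by
    rw [tsum_congr hG, tsum_geo_half]
  rw [Phi, hRsum, hGsum]
  norm_num

lemma Phi_W_le (n : ℕ) : Phi f (W f n) ≤ 10 := by
  induction n with
  | zero => exact Phi_nil_le f
  | succ n ih => exact le_trans (Phi_step f (W f n)) ih

lemma termR_le_Phi (j m : ℕ) (x : List Bool) : termR f j m x ≤ Phi f x := by
  rw [Phi]
  have h1 : termR f j m x ≤ ∑' p : ℕ × ℕ, termR f p.1 p.2 x := by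
    have := Summable.le_tsum (summable_termR f x) (j, m)
      (fun p _ => termR_nonneg f p.1 p.2 x)
    exact this
  have h2 : (0:ℝ) ≤ ∑' m : ℕ, termG m x := tsum_nonneg (fun m => termG_nonneg m x)
  linarith
lemma termG_le_Phi (m : ℕ) (x : List Bool) : termG m x ≤ Phi f x := by
  rw [Phi]
  have h1 : termG m x ≤ ∑' m' : ℕ, termG m' x :=
    Summable.le_tsum (summable_termG x) m (fun m' _ => termG_nonneg m' x)
  have h2 : (0:ℝ) ≤ ∑' p : ℕ × ℕ, termR f p.1 p.2 x :=
    tsum_nonneg (fun p => termR_nonneg f p.1 p.2 x)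
  linarith

/-! ### structure of W -/

lemma W_succ (n : ℕ) : W f (n + 1) = W f n ++ [choice f (W f n)] := rfl

lemma W_length (n : ℕ) : (W f n).length = n := by
  induction n with
  | zero => rfl
  | succ n ih => rw [W_succ, len_app, ih]
lemma W_take (n i : ℕ) (h : i ≤ n) : (W f n).take i = W f i := by
  induction n with
  | zero =>
      have : i = 0 := Nat.le_zero.mp h
      subst this
      rfl
  | succ n ih =>
      rcases Nat.lt_or_ge i (n + 1) with hlt | hge
      · have hle : i ≤ n := Nat.lt_succ_iff.mp hlt
        rw [W_succ, take_app _ _ (by rw [W_length]; exact hle)]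
        exact ih hle
      · have : i = n + 1 := le_antisymm h hge
        subst this
        calc (W f (n+1)).take (n+1) = (W f (n+1)).take ((W f (n+1)).length) := by
              rw [W_length]
        _ = W f (n+1) := List.take_length
lemma W_getD (n i : ℕ) (h : i < n) : (W f n).getD i false = om f i := by
  induction n with
  | zero => omega
  | succ n ih =>
      rcases Nat.lt_or_ge i n with hlt | hge
      · rw [W_succ, getD_app _ _ (by rw [W_length]; exact hlt)]
        exact ih hlt
      · have : i = n := by omega
        subst this
        have hkey : ∀ (x : List Bool) (b : Bool) (k : ℕ), k = x.length →
            (x ++ [b]).getD k false = b := by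
          intro x b k hk
          subst hk
          exact getD_app_len x b
        rw [W_succ, hkey (W f i) _ i (W_length f i).symm]
        rfl
lemma prefixFn_succ (ω : ℕ → Bool) (n : ℕ) :
    prefixFn ω (n + 1) = prefixFn ω n ++ [ω n] := by
  rw [prefixFn, prefixFn, List.ofFn_succ']
  simp [List.concat_eq_append]

lemma W_eq_prefixFn (n : ℕ) : W f n = prefixFn (om f) n := by
  induction n with
  | zero => rfl
  | succ n ih => rw [W_succ, prefixFn_succ, ← ih]; rfl

/-! ### ballot property -/

lemma Dg_W_nonneg (n : ℕ) : 0 ≤ Dg (W f n) := by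
  induction n with
  | zero => simp [W, Dg]
  | succ n ih =>
      rw [W_succ, Dg_append]
      by_cases h0 : Dg (W f n) = 0
      · rw [choice, if_pos h0]
        simp [h0]
      · have h1 : 1 ≤ Dg (W f n) := by omega
        split_ifs <;> omega

def N1 : ℕ := 10 ^ 14

lemma eb_ge (i m : ℕ) (h : ebExp i + 1 ≤ m) : 2 * th m ≤ eb i := by
  have hm1 : m - 1 + 1 = m := by omega
  have h2 : (2:ℝ) ^ m = 2 ^ (m - 1) * 2 := by rw [← pow_succ, hm1]
  have h3 : 2 * th m = ((2:ℝ) ^ (m - 1))⁻¹ := by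
    rw [th, h2, mul_inv]
    ring
  rw [h3, eb]
  apply inv_anti₀ (by positivity)
  apply pow_le_pow_right₀ (by norm_num)
  omega

lemma epsAt_ge_eb (y : List Bool) : eb y.length ≤ epsAt y := by
  rw [epsAt]
  split_ifs
  · linarith [eb_le_half y.length]
  · exact le_refl _

lemma forced_lt_N1 (n : ℕ) (h : Dg (W f n) = 0) : n < N1 := by
  by_contra hge
  push_neg at hge
  have hN1 : (10:ℕ) ^ 14 ≤ n := hge
  have hn1 : 1 ≤ n := le_trans (by norm_num) hN1
  set m : ℕ := Nat.log 2 (n + 1) / 4 + 2 with hm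
  have hθ := th_pos m
  have hθ1 := th_le_one m
  have hinv : termG m (W f n) ≤ 10 := le_trans (termG_le_Phi f m (W f n)) (Phi_W_le f n)
  have hlen : (W f n).length = n := W_length f n
  have hCpos := Cp_pos m (W f n)
  have hterm : termG m (W f n) = th m / Cp m (W f n) := by
    rw [termG, h]
    norm_num
  -- each factor is at most 1 - θ²/2
  have hfac : ∀ i ∈ Finset.range n,
      ch m - epsAt ((W f n).take i) * sh m ≤ 1 - th m ^ 2 / 2 := by
    intro i hi
    rw [Finset.mem_range] at hi
    have hWt : (W f n).take i = W f i := W_take f n i (le_of_lt hi)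
    have hWlen : (W f i).length = i := W_length f i
    have hexp : ebExp i + 1 ≤ m := by
      have hlog : Nat.log 2 (i + 2) ≤ Nat.log 2 (n + 1) :=
        Nat.log_mono_right (by omega)
      simp only [ebExp, hm]
      omega
    have heb : 2 * th m ≤ eb i := eb_ge i m hexp
    have heps : 2 * th m ≤ epsAt ((W f n).take i) := by
      rw [hWt]
      calc 2 * th m ≤ eb i := heb
      _ = eb (W f i).length := by rw [hWlen]
      _ ≤ epsAt (W f i) := epsAt_ge_eb (W f i)
    have hsh2 := th_half_le_sh m
    have hshnn := sh_nonneg m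
    have hch := ch_le m
    nlinarith
  have hCple : Cp m (W f n) ≤ (1 - th m ^ 2 / 2) ^ n := by
    rw [Cp, hlen]
    calc ∏ i ∈ Finset.range n, (ch m - epsAt ((W f n).take i) * sh m)
        ≤ ∏ _i ∈ Finset.range n, (1 - th m ^ 2 / 2) :=
          Finset.prod_le_prod (fun i _ => le_of_lt (factorC_pos m _)) hfac
    _ = (1 - th m ^ 2 / 2) ^ n := by rw [Finset.prod_const, Finset.card_range]
  -- Bernoulli
  have ha0 : (0:ℝ) ≤ th m ^ 2 / 2 := by positivity
  have ha1 : th m ^ 2 / 2 ≤ 1 := by nlinarith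
  have hbern : (1 - th m ^ 2 / 2) ^ n * (1 + n * (th m ^ 2 / 2)) ≤ 1 := by
    have h1 : 1 + (n:ℝ) * (th m ^ 2 / 2) ≤ (1 + th m ^ 2 / 2) ^ n :=
      one_add_mul_le_pow (by linarith) n
    have h2 : (1 - th m ^ 2 / 2) ^ n * (1 + th m ^ 2 / 2) ^ n ≤ 1 := by
      rw [← mul_pow]
      apply pow_le_one₀ (by nlinarith) (by nlinarith)
    have h3 : (0:ℝ) ≤ (1 - th m ^ 2 / 2) ^ n := pow_nonneg (by nlinarith) n
    nlinarith
  -- conclude θ·(1 + n θ²/2) ≤ 10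
  have hkey : th m * (1 + (n:ℝ) * (th m ^ 2 / 2)) ≤ 10 := by
    have h1 : th m ≤ 10 * Cp m (W f n) := by
      rw [hterm, div_le_iff₀ hCpos] at hinv
      linarith
    have h2 : th m ≤ 10 * (1 - th m ^ 2 / 2) ^ n := by
      nlinarith
    have h3 : (0:ℝ) ≤ 1 + (n:ℝ) * (th m ^ 2 / 2) := by positivity
    nlinarith
  have hcube : (n:ℝ) * (th m ^ 3) ≤ 20 := by nlinarith [sq_nonneg (th m)]
  -- so n ≤ 20 * 2^(3m)  (naturals)
  have hth3 : th m ^ 3 = ((2:ℝ) ^ (3 * m))⁻¹ := by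
    rw [th, inv_pow, ← pow_mul, mul_comm m 3]
  have hnle : (n:ℝ) ≤ 20 * (2:ℝ) ^ (3 * m) := by
    rw [hth3] at hcube
    have hp : (0:ℝ) < (2:ℝ) ^ (3 * m) := by positivity
    rw [mul_inv_le_iff₀ hp] at hcube
    linarith
  have hnleN : n ≤ 20 * 2 ^ (3 * m) := by exact_mod_cast hnle
  -- and 2^(4m) ≤ 256 * (n+1)
  have h4m : 2 ^ (4 * m) ≤ 256 * (n + 1) := by
    have h1 : 4 * m ≤ Nat.log 2 (n + 1) + 8 := by
      simp only [hm]
      omega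
    calc (2:ℕ) ^ (4 * m) ≤ 2 ^ (Nat.log 2 (n + 1) + 8) := Nat.pow_le_pow_right (by norm_num) h1
    _ = 2 ^ Nat.log 2 (n + 1) * 256 := by rw [pow_add]; norm_num
    _ ≤ (n + 1) * 256 := by
        apply Nat.mul_le_mul_right
        exact Nat.pow_log_le_self 2 (by omega)
    _ = 256 * (n + 1) := by ring
  -- combine: n^4 ≤ 20^4 * (2^(4m))^3 ≤ 20^4 * 256^3 * 8 * n^3
  have hfourth : n ^ 4 ≤ 20 ^ 4 * 2 ^ (12 * m) := by
    calc n ^ 4 ≤ (20 * 2 ^ (3 * m)) ^ 4 := Nat.pow_le_pow_left hnleN 4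
    _ = 20 ^ 4 * 2 ^ (12 * m) := by rw [mul_pow, ← pow_mul]; ring_nf
  have h12m : (2:ℕ) ^ (12 * m) ≤ (256 * (n + 1)) ^ 3 := by
    calc (2:ℕ) ^ (12 * m) = (2 ^ (4 * m)) ^ 3 := by rw [← pow_mul]; ring_nf
    _ ≤ (256 * (n + 1)) ^ 3 := Nat.pow_le_pow_left h4m 3
  have hcube2 : (256 * (n + 1)) ^ 3 ≤ 256 ^ 3 * 8 * n ^ 3 := by
    have h1 : n + 1 ≤ 2 * n := by omega
    calc (256 * (n + 1)) ^ 3 ≤ (256 * (2 * n)) ^ 3 :=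
          Nat.pow_le_pow_left (by omega) 3
    _ = 256 ^ 3 * 8 * n ^ 3 := by ring
  have hfinal : n ^ 4 ≤ (20 ^ 4 * 256 ^ 3 * 8) * n ^ 3 := by
    calc n ^ 4 ≤ 20 ^ 4 * 2 ^ (12 * m) := hfourth
    _ ≤ 20 ^ 4 * ((256 * (n + 1)) ^ 3) := Nat.mul_le_mul_left _ h12m
    _ ≤ 20 ^ 4 * (256 ^ 3 * 8 * n ^ 3) := Nat.mul_le_mul_left _ hcube2
    _ = (20 ^ 4 * 256 ^ 3 * 8) * n ^ 3 := by ring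
  have hnC : n ≤ 20 ^ 4 * 256 ^ 3 * 8 := by
    have h1 : n ^ 3 * n ≤ n ^ 3 * (20 ^ 4 * 256 ^ 3 * 8) := by
      calc n ^ 3 * n = n ^ 4 := by ring
      _ ≤ (20 ^ 4 * 256 ^ 3 * 8) * n ^ 3 := hfinal
      _ = n ^ 3 * (20 ^ 4 * 256 ^ 3 * 8) := by ring
    exact Nat.le_of_mul_le_mul_left h1 (by positivity)
  have : (10:ℕ) ^ 14 ≤ 20 ^ 4 * 256 ^ 3 * 8 := le_trans hN1 hnC
  norm_num at this

/-! ### the per-rule discrepancy bound -/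

def Esum (K : ℕ) : ℝ := ∑ k ∈ Finset.range K, eb k

lemma sum_anti_le (s : Finset ℕ) : ∑ i ∈ s, eb i ≤ Esum s.card := by
  induction s using Finset.strongInduction with
  | _ s ih =>
    rcases s.eq_empty_or_nonempty with rfl | hne
    · simp [Esum]
    · obtain ⟨a, ha, hamax⟩ := s.exists_max_image id hne
      simp only [id] at hamax
      obtain ⟨c, hc⟩ : ∃ c, s.card = c + 1 :=
        ⟨s.card - 1, by have := Finset.card_pos.mpr hne; omega⟩
      have herase : (s.erase a).card = c := by
        rw [Finset.card_erase_of_mem ha, hc]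
        omega
      have ih1 := ih (s.erase a) (Finset.erase_ssubset ha)
      rw [herase] at ih1
      have hage : c ≤ a := by
        have hsub : s ⊆ Finset.range (a + 1) := by
          intro b hb
          exact Finset.mem_range.mpr (by have := hamax b hb; omega)
        have := Finset.card_le_card hsub
        rw [Finset.card_range, hc] at this
        omega
      have hsum : ∑ i ∈ s, eb i = eb a + ∑ i ∈ s.erase a, eb i :=
        (Finset.add_sum_erase s eb ha).symm
      have hE : Esum (c + 1) = Esum c + eb c := by
        rw [Esum, Esum, Finset.sum_range_succ]
      have heba : eb a ≤ eb c := eb_antitone hage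
      rw [hc, hE, hsum]
      linarith

lemma log_rho_ge (m : ℕ) : th m / 2 ≤ Real.log (rho m) := by
  have hρ := rho_gt_one m
  have hθ := th_pos m
  have hθ1 := th_le_one m
  have hinv : (0:ℝ) < (rho m)⁻¹ := inv_pos.mpr (rho_pos m)
  have h1 : Real.log ((rho m)⁻¹) ≤ (rho m)⁻¹ - 1 := Real.log_le_sub_one_of_pos hinv
  rw [Real.log_inv] at h1
  have h2 : 1 - (rho m)⁻¹ ≤ Real.log (rho m) := by linarith
  have h3 : th m / 2 ≤ 1 - (rho m)⁻¹ := by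
    have hmul := rho_mul_inv m
    have h4 : rho m = 1 + th m := rfl
    nlinarith
  linarith

lemma rule_bound (j m n : ℕ) :
    |(Dr (f j) (W f n) : ℝ)| ≤
      (2 * 2 ^ m * (Real.log 10 + (j + m) * Real.log 2) + 2 * N1)
        + th m * selCount (f j) (W f n) + 2 * Esum (selCount (f j) (W f n)) := by
  classical
  have hlen : (W f n).length = n := W_length f n
  set x := W f n with hx
  set D := Dr (f j) x with hD
  set s : Finset ℕ := (Finset.range x.length).filter (fun i => f j (x.take i) = true) with hs
  have hKdef : selCount (f j) x = s.card := rfl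
  have hρpos := rho_pos m
  have hρ1 := rho_gt_one m
  have hθ := th_pos m
  have hBpos : (0:ℝ) < Bp (f j) m x := lt_of_lt_of_le one_pos (Bp_ge_one (f j) m x)
  -- invariant
  have hinv : termR f j m x ≤ 10 := le_trans (termR_le_Phi f j m x) (Phi_W_le f n)
  have hI1 : rho m ^ D + rho m ^ (-D) ≤ 10 * 2 ^ (j + m) * Bp (f j) m x := by
    rw [termR, div_le_iff₀ hBpos] at hinv
    have hw : (0:ℝ) < (2:ℝ) ^ (j + m) := by positivity
    have := mul_le_mul_of_nonneg_left hinv (le_of_lt hw)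
    calc rho m ^ D + rho m ^ (-D)
        = (2:ℝ) ^ (j + m) * (((2:ℝ) ^ (j + m))⁻¹ * (rho m ^ D + rho m ^ (-D))) := by
          rw [← mul_assoc, mul_inv_cancel₀ (by positivity), one_mul]
    _ ≤ (2:ℝ) ^ (j + m) * (10 * Bp (f j) m x) := this
    _ = 10 * 2 ^ (j + m) * Bp (f j) m x := by ring
  have habs : rho m ^ |D| ≤ rho m ^ D + rho m ^ (-D) := by
    rcases abs_cases D with ⟨h1, _⟩ | ⟨h1, _⟩
    · rw [h1]
      have := zpow_pos hρpos (-D)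
      linarith
    · rw [h1]
      have := zpow_pos hρpos D
      linarith
  -- take logs
  have hzp : (0:ℝ) < rho m ^ |D| := zpow_pos hρpos _
  have hlog1 : Real.log (rho m ^ |D|) ≤ Real.log (10 * 2 ^ (j + m) * Bp (f j) m x) :=
    Real.log_le_log hzp (le_trans habs hI1)
  rw [Real.log_zpow] at hlog1
  have hlogsplit : Real.log (10 * 2 ^ (j + m) * Bp (f j) m x)
      = Real.log 10 + (j + m) * Real.log 2 + Real.log (Bp (f j) m x) := by
    rw [Real.log_mul (by positivity) (ne_of_gt hBpos),
      Real.log_mul (by norm_num) (by positivity), Real.log_pow]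
    push_cast
    ring
  -- bound log Bp
  have hfaclog : ∀ i ∈ s, Real.log (ch m + epsAt (x.take i) * sh m)
      ≤ th m ^ 2 / 2 + epsAt (x.take i) * th m := by
    intro i hi
    have h1 : (1:ℝ) ≤ ch m + epsAt (x.take i) * sh m := factorB_ge_one m _
    have h2 := Real.log_le_sub_one_of_pos (lt_of_lt_of_le one_pos h1)
    have h3 := ch_le m
    have h4 := sh_le_th m
    have h5 := epsAt_pos (x.take i)
    nlinarith
  have hlogB : Real.log (Bp (f j) m x)
      ≤ s.card * (th m ^ 2 / 2) + th m * ∑ i ∈ s, epsAt (x.take i) := by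
    rw [Bp]
    rw [Real.log_prod (fun i _ => by
      have := factorB_ge_one m (x.take i)
      intro hzero
      rw [hzero] at this
      norm_num at this)]
    calc ∑ i ∈ s, Real.log (ch m + epsAt (x.take i) * sh m)
        ≤ ∑ i ∈ s, (th m ^ 2 / 2 + epsAt (x.take i) * th m) :=
          Finset.sum_le_sum hfaclog
    _ = s.card * (th m ^ 2 / 2) + th m * ∑ i ∈ s, epsAt (x.take i) := by
          rw [Finset.sum_add_distrib, Finset.sum_const, nsmul_eq_mul, ← Finset.sum_mul]
          ring
  -- bound the epsAt sum
  have hepsum : ∑ i ∈ s, epsAt (x.take i) ≤ Esum s.card + N1 := by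
    have hmem : ∀ i ∈ s, i < n := by
      intro i hi
      have := (Finset.mem_filter.mp hi).1
      rw [Finset.mem_range, hlen] at this
      exact this
    have hterm : ∀ i ∈ s, epsAt (x.take i) ≤ eb i + (if i < N1 then (1:ℝ) else 0) := by
      intro i hi
      have hWt : x.take i = W f i := W_take f n i (le_of_lt (hmem i hi))
      have hWlen : (W f i).length = i := W_length f i
      rw [hWt, epsAt, hWlen]
      split_ifs with h1 h2
      · linarith [eb_pos i]
      · exact absurd (forced_lt_N1 f i h1) h2
      · linarith
      · linarith
    calc ∑ i ∈ s, epsAt (x.take i)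
        ≤ ∑ i ∈ s, (eb i + (if i < N1 then (1:ℝ) else 0)) := Finset.sum_le_sum hterm
    _ = ∑ i ∈ s, eb i + ∑ i ∈ s, (if i < N1 then (1:ℝ) else 0) := Finset.sum_add_distrib
    _ ≤ Esum s.card + N1 := by
        have h1 := sum_anti_le s
        have h2 : ∑ i ∈ s, (if i < N1 then (1:ℝ) else 0) ≤ N1 := by
          have hb : ∑ i ∈ s, (if i < N1 then (1:ℝ) else 0)
              = ((s.filter (fun i => i < N1)).card : ℝ) := by
            rw [Finset.sum_boole]
          have hsub : s.filter (fun i => i < N1) ⊆ Finset.range N1 := by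
            intro i hi
            exact Finset.mem_range.mpr (Finset.mem_filter.mp hi).2
          have hcard := Finset.card_le_card hsub
          rw [Finset.card_range] at hcard
          rw [hb]
          exact_mod_cast hcard
        linarith
  -- put everything together
  have hfinal : |(D:ℝ)| * (th m / 2)
      ≤ Real.log 10 + (j + m) * Real.log 2 + s.card * (th m ^ 2 / 2)
        + th m * (Esum s.card + N1) := by
    have h1 : |(D:ℝ)| * (th m / 2) ≤ |(D:ℝ)| * Real.log (rho m) :=
      mul_le_mul_of_nonneg_left (log_rho_ge m) (abs_nonneg _)
    have h2 : ((|D| : ℤ) : ℝ) = |(D : ℝ)| := by push_cast; ring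
    rw [h2] at hlog1
    have h3 := mul_le_mul_of_nonneg_left hepsum (le_of_lt hθ)
    rw [hlogsplit] at hlog1
    nlinarith
  have hth2 : (0:ℝ) < th m / 2 := by linarith
  have hid : th m * 2 ^ m = 1 := by
    rw [th]
    field_simp
  have hcast : (selCount (f j) x : ℝ) = (s.card : ℝ) := by rw [hKdef]
  rw [hcast]
  have hRG : Real.log 10 + (j + m) * Real.log 2 + s.card * (th m ^ 2 / 2)
        + th m * (Esum s.card + N1)
      = (th m / 2) * ((2 * 2 ^ m * (Real.log 10 + (j + m) * Real.log 2) + 2 * N1)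
        + th m * s.card + 2 * Esum s.card) := by
    linear_combination (-(Real.log 10 + (j + m) * Real.log 2)) * hid
  rw [hRG] at hfinal
  have hfinal2 : (th m / 2) * |(D:ℝ)|
      ≤ (th m / 2) * ((2 * 2 ^ m * (Real.log 10 + (j + m) * Real.log 2) + 2 * N1)
        + th m * s.card + 2 * Esum s.card) := by
    calc (th m / 2) * |(D:ℝ)| = |(D:ℝ)| * (th m / 2) := by ring
    _ ≤ _ := hfinal
  exact le_of_mul_le_mul_left hfinal2 hth2

/-! ### analytic limit lemmas -/

lemma eb_small (M k : ℕ) (h : 2 ^ (4 * M) ≤ k) : eb k ≤ th M := by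
  rw [eb, th]
  apply inv_anti₀ (by positivity)
  apply pow_le_pow_right₀ (by norm_num)
  have h1 : 2 ^ (4 * M) ≤ k + 2 := by omega
  have h2 : 4 * M ≤ Nat.log 2 (k + 2) :=
    (Nat.le_log_iff_pow_le (by norm_num) (by omega)).mpr h1
  simp only [ebExp]
  omega

lemma esum_le (M K : ℕ) : Esum K ≤ 2 ^ (4 * M) + K * th M := by
  have hterm : ∀ k ∈ Finset.range K,
      eb k ≤ (if k < 2 ^ (4 * M) then (1:ℝ) else 0) + th M := by
    intro k _
    split_ifs with h
    · have := eb_le_half k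
      have := th_pos M
      linarith
    · push_neg at h
      have := eb_small M k h
      linarith
  calc Esum K ≤ ∑ k ∈ Finset.range K, ((if k < 2 ^ (4 * M) then (1:ℝ) else 0) + th M) :=
        Finset.sum_le_sum hterm
  _ = ∑ k ∈ Finset.range K, (if k < 2 ^ (4 * M) then (1:ℝ) else 0) + K * th M := by
        rw [Finset.sum_add_distrib, Finset.sum_const, nsmul_eq_mul, Finset.card_range]
  _ ≤ 2 ^ (4 * M) + K * th M := by
        have h1 : ∑ k ∈ Finset.range K, (if k < 2 ^ (4 * M) then (1:ℝ) else 0)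
            ≤ (2:ℝ) ^ (4 * M) := by
          rw [Finset.sum_boole]
          have hsub : (Finset.range K).filter (fun k => k < 2 ^ (4 * M))
              ⊆ Finset.range (2 ^ (4 * M)) := by
            intro k hk
            exact Finset.mem_range.mpr (Finset.mem_filter.mp hk).2
          have hcard := Finset.card_le_card hsub
          rw [Finset.card_range] at hcard
          calc (((Finset.range K).filter (fun k => k < 2 ^ (4 * M))).card : ℝ)
              ≤ ((2 ^ (4 * M) : ℕ) : ℝ) := by exact_mod_cast hcard
          _ = (2:ℝ) ^ (4 * M) := by push_cast; ring
        linarith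

lemma th_lt (δ : ℝ) (hδ : 0 < δ) : ∃ m : ℕ, th m < δ := by
  obtain ⟨m, hm⟩ := pow_unbounded_of_one_lt δ⁻¹ (by norm_num : (1:ℝ) < 2)
  refine ⟨m, ?_⟩
  rw [th]
  rw [inv_lt_comm₀ (by positivity) hδ] at *
  exact hm

lemma tendsto_of_bound (u : ℕ → ℤ) (c : ℕ → ℝ)
    (h : ∀ m K, |(u K : ℝ)| ≤ c m + th m * K + 2 * Esum K) :
    Tendsto (fun K => (u K : ℝ) / K) atTop (nhds 0) := by
  rw [Metric.tendsto_atTop]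
  intro δ hδ
  obtain ⟨m, hm⟩ := th_lt (δ / 8) (by linarith)
  obtain ⟨M, hM⟩ := th_lt (δ / 8) (by linarith)
  have hCpos : (0:ℝ) ≤ |c m| + 2 * 2 ^ (4 * M) := by positivity
  -- choose N beyond which (|c m| + 2*2^(4M)) / K < δ / 2
  obtain ⟨N0, hN0⟩ := (Metric.tendsto_atTop.mp
    (tendsto_const_div_atTop_nhds_zero_nat (|c m| + 2 * 2 ^ (4 * M)))) (δ / 2) (by linarith)
  refine ⟨max N0 1, fun K hK => ?_⟩
  have hK0 : 1 ≤ K := le_trans (le_max_right _ _) hK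
  have hKpos : (0:ℝ) < K := by exact_mod_cast hK0
  have hN0' := hN0 K (le_trans (le_max_left _ _) hK)
  rw [Real.dist_eq, sub_zero] at hN0' ⊢
  have habs : |(u K : ℝ) / K| = |(u K : ℝ)| / K := by
    rw [abs_div, abs_of_pos hKpos]
  rw [habs]
  have hb := h m K
  have hE := esum_le M K
  have h1 : |(u K : ℝ)| ≤ (|c m| + 2 * 2 ^ (4 * M)) + (th m + 2 * th M) * K := by
    have h2 : c m ≤ |c m| := le_abs_self _
    have h3 : (0:ℝ) ≤ (K:ℝ) := le_of_lt hKpos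
    nlinarith
  have h4 : |(u K : ℝ)| / K ≤ (|c m| + 2 * 2 ^ (4 * M)) / K + (th m + 2 * th M) := by
    rw [div_le_iff₀ hKpos]
    have h5 : ((|c m| + 2 * 2 ^ (4 * M)) / K) * K = |c m| + 2 * 2 ^ (4 * M) := by
      field_simp
    nlinarith
  have h6 : (|c m| + 2 * 2 ^ (4 * M)) / K ≤ |(|c m| + 2 * 2 ^ (4 * M)) / K| := le_abs_self _
  calc |(u K : ℝ)| / K ≤ (|c m| + 2 * 2 ^ (4 * M)) / K + (th m + 2 * th M) := h4
  _ < δ / 2 + (δ / 8 + 2 * (δ / 8)) := by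
      have := lt_of_le_of_lt h6 hN0'
      have hthm := th_pos m
      have hthM := th_pos M
      nlinarith
  _ ≤ δ := by linarith

lemma tendsto_half (u : ℕ → ℤ) (ones : ℕ → ℕ)
    (hu : Tendsto (fun K => (u K : ℝ) / K) atTop (nhds 0))
    (h : ∀ K, (u K : ℝ) = K - 2 * ones K) :
    Tendsto (fun K => (ones K : ℝ) / K) atTop (nhds (1 / 2)) := by
  have heq : ∀ᶠ K in atTop, (1 - (u K : ℝ) / K) / 2 = (ones K : ℝ) / K := by
    filter_upwards [eventually_ge_atTop 1] with K hK
    have hKpos : (0:ℝ) < K := by exact_mod_cast hK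
    rw [h K]
    field_simp
    ring
  have h2 : Tendsto (fun K => (1 - (u K : ℝ) / K) / 2) atTop (nhds ((1 - 0) / 2)) :=
    (tendsto_const_nhds.sub hu).div_const 2
  norm_num at h2
  exact Tendsto.congr' heq h2

lemma Dr_eq_counts (g : List Bool → Bool) (x : List Bool) :
    Dr g x = (selCount g x : ℤ) - 2 * selTrue g x := by
  classical
  rw [Dr, selCount, selTrue]
  have hterm : ∀ i ∈ Finset.range x.length,
      (if g (x.take i) = true then (if x.getD i false = true then (-1:ℤ) else 1) else 0)
      = (if g (x.take i) = true then (1:ℤ) else 0)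
        - 2 * (if g (x.take i) = true ∧ x.getD i false = true then (1:ℤ) else 0) := by
    intro i _
    cases hg : g (x.take i) <;> cases hb : x.getD i false <;> simp <;> try omega
  rw [Finset.sum_congr rfl hterm, Finset.sum_sub_distrib, ← Finset.mul_sum,
    Finset.sum_boole, Finset.sum_boole]

end

end Ville

namespace Ville

noncomputable section

variable (f : ℕ → List Bool → Bool)

lemma selCount_W (g : List Bool → Bool) (n : ℕ) :
    selCount g (W f n)
      = ((Finset.range n).filter (fun i => g (prefixFn (om f) i) = true)).card := by
  classical
  rw [selCount, W_length]
  congr 1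
  apply Finset.filter_congr
  intro i hi
  have h1 : (W f n).take i = prefixFn (om f) i := by
    rw [W_take f n i (le_of_lt (Finset.mem_range.mp hi)), W_eq_prefixFn]
  rw [h1]

lemma selTrue_W (g : List Bool → Bool) (n : ℕ) :
    selTrue g (W f n)
      = ((Finset.range n).filter
          (fun i => g (prefixFn (om f) i) = true ∧ om f i = true)).card := by
  classical
  rw [selTrue, W_length]
  congr 1
  apply Finset.filter_congr
  intro i hi
  have hi' := Finset.mem_range.mp hi
  have h1 : (W f n).take i = prefixFn (om f) i := by
    rw [W_take f n i (le_of_lt hi'), W_eq_prefixFn]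
  have h2 : (W f n).getD i false = om f i := W_getD f n i hi'
  rw [h1, h2]

lemma count_W (b : Bool) (n : ℕ) :
    (W f n).count b = ((Finset.range n).filter (fun i => om f i = b)).card := by
  classical
  induction n with
  | zero => simp [W]
  | succ n ih =>
      rw [W_succ, List.count_append, Finset.range_add_one, Finset.filter_insert]
      have hsingle : List.count b [choice f (W f n)] = if om f n = b then 1 else 0 := by
        rw [List.count_singleton]
        by_cases h : om f n = b
        · rw [if_pos h, if_pos]
          rw [show choice f (W f n) = om f n from rfl, h]
          simp
        · rw [if_neg h, if_neg]
          intro hc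
          apply h
          have : choice f (W f n) = b := by
            exact eq_of_beq hc
          exact this
      rw [hsingle, ih]
      split_ifs with h
      · rw [Finset.card_insert_of_notMem (by simp)]
      · omega

end

end Ville

/-- **Ville's theorem.** For every countable family `S` of selection rules there is a
sequence `ω` with limit frequency `1/2`, satisfying requirement II (with limit `1/2`)
for every rule in `S`, every prefix of which has at least as many `false`s (zeros) as
`true`s (ones). -/
theorem ville_example (S : Set (List Bool → Bool)) (hS : S.Countable) :
    ∃ ω : ℕ → Bool, LimitFreq ω (1 / 2) ∧ (∀ s ∈ S, SatisfiesII s ω (1 / 2)) ∧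
      ∀ n : ℕ, ((Finset.range n).filter fun i => ω i = true).card ≤
        ((Finset.range n).filter fun i => ω i = false).card := by
  classical
  obtain ⟨f, hf⟩ := (hS.insert (fun _ => true)).exists_eq_range
    (Set.insert_nonempty _ _)
  set ω := Ville.om f with hω
  refine ⟨ω, ?_, ?_, ?_⟩
  · -- limit frequency of ω itself
    obtain ⟨j0, hj0⟩ : ∃ j0, f j0 = (fun _ => true) := by
      have : (fun _ : List Bool => true) ∈ Set.range f := by
        rw [← hf]; exact Set.mem_insert _ _
      exact ⟨this.choose, this.choose_spec⟩
    have hselc : ∀ n, Ville.selCount (f j0) (Ville.W f n) = n := by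
      intro n
      rw [Ville.selCount_W, hj0]
      simp
    have hbound : ∀ m n : ℕ, |((Ville.Dr (f j0) (Ville.W f n) : ℤ) : ℝ)|
        ≤ (2 * 2 ^ m * (Real.log 10 + ((j0:ℝ) + m) * Real.log 2) + 2 * Ville.N1)
          + Ville.th m * n + 2 * Ville.Esum n := by
      intro m n
      have := Ville.rule_bound f j0 m n
      rw [hselc] at this
      exact this
    have htend := Ville.tendsto_of_bound (fun n => Ville.Dr (f j0) (Ville.W f n))
      (fun m => 2 * 2 ^ m * (Real.log 10 + ((j0:ℝ) + m) * Real.log 2) + 2 * Ville.N1)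
      hbound
    have hones : ∀ n, Ville.selTrue (f j0) (Ville.W f n)
        = ((Finset.range n).filter (fun i => ω i = true)).card := by
      intro n
      rw [Ville.selTrue_W, hj0]
      congr 1
      apply Finset.filter_congr
      intro i _
      simp; rfl
    have hrel : ∀ n, ((Ville.Dr (f j0) (Ville.W f n) : ℤ) : ℝ)
        = n - 2 * (((Finset.range n).filter (fun i => ω i = true)).card : ℝ) := by
      intro n
      have h1 := Ville.Dr_eq_counts (f j0) (Ville.W f n)
      rw [hselc, hones] at h1
      have : ((Ville.Dr (f j0) (Ville.W f n) : ℤ) : ℝ)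
          = ((n : ℤ) - 2 * (((Finset.range n).filter (fun i => ω i = true)).card : ℤ) : ℤ) := by
        exact_mod_cast congrArg (fun z : ℤ => (z : ℝ)) h1
      rw [this]
      push_cast
      ring
    have := Ville.tendsto_half (fun n => Ville.Dr (f j0) (Ville.W f n))
      (fun n => ((Finset.range n).filter (fun i => ω i = true)).card) htend hrel
    rw [LimitFreq]
    convert this using 2
  · -- requirement II for every rule in S
    intro s hs
    by_cases hfin : (SelectedIndices s ω).Finite
    · exact Or.inl hfin
    right
    obtain ⟨j, hj⟩ : ∃ j, f j = s := by
      have : s ∈ Set.range f := by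
        rw [← hf]; exact Set.mem_insert_of_mem _ hs
      exact ⟨this.choose, this.choose_spec⟩
    set P : ℕ → Prop := fun i => i ∈ SelectedIndices s ω with hP
    have hPinf : (setOf P).Infinite := hfin
    have hcount : ∀ K, Nat.count P (Nat.nth P K) = K := by
      intro K
      exact Nat.count_nth (fun hfin' => absurd hfin' hPinf)
    have hselK : ∀ K, Ville.selCount (f j) (Ville.W f (Nat.nth P K)) = K := by
      intro K
      have h1 : Ville.selCount (f j) (Ville.W f (Nat.nth P K))
          = ((Finset.range (Nat.nth P K)).filter (fun i => s (prefixFn ω i) = true)).card := by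
        rw [Ville.selCount_W, hj]
      have h2 : Nat.count P (Nat.nth P K)
          = ((Finset.range (Nat.nth P K)).filter (fun x => P x)).card :=
        Nat.count_eq_card_filter_range P _
      have h3 : ((Finset.range (Nat.nth P K)).filter (fun i => s (prefixFn ω i) = true)).card
          = ((Finset.range (Nat.nth P K)).filter (fun x => P x)).card := by
        congr 1
        apply Finset.filter_congr
        intro i _
        exact Iff.rfl
      rw [h1, h3, ← h2, hcount]
    have hbound : ∀ m K : ℕ, |((Ville.Dr (f j) (Ville.W f (Nat.nth P K)) : ℤ) : ℝ)|
        ≤ (2 * 2 ^ m * (Real.log 10 + ((j:ℝ) + m) * Real.log 2) + 2 * Ville.N1)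
          + Ville.th m * K + 2 * Ville.Esum K := by
      intro m K
      have := Ville.rule_bound f j m (Nat.nth P K)
      rw [hselK] at this
      exact this
    have htend := Ville.tendsto_of_bound
      (fun K => Ville.Dr (f j) (Ville.W f (Nat.nth P K)))
      (fun m => 2 * 2 ^ m * (Real.log 10 + ((j:ℝ) + m) * Real.log 2) + 2 * Ville.N1)
      hbound
    have hcard : ∀ K, ((Finset.range K).filter (fun k => SelectedSeq s ω k = true)).card
        = ((Finset.range (Nat.nth P K)).filter
            (fun i => s (prefixFn ω i) = true ∧ ω i = true)).card := by
      intro K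
      apply Finset.card_bij (fun k _ => Nat.nth P k)
      · intro k hk
        rw [Finset.mem_filter, Finset.mem_range] at hk
        rw [Finset.mem_filter, Finset.mem_range]
        refine ⟨(Nat.nth_lt_nth hPinf).mpr hk.1, ?_, hk.2⟩
        exact Nat.nth_mem_of_infinite hPinf k
      · intro k1 h1 k2 h2 heq
        exact (Nat.nth_injective hPinf) heq
      · intro i hi
        rw [Finset.mem_filter, Finset.mem_range] at hi
        obtain ⟨hilt, hiP, hiω⟩ := hi
        have hiP' : P i := hiP
        refine ⟨Nat.count P i, ?_, Nat.nth_count hiP'⟩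
        rw [Finset.mem_filter, Finset.mem_range]
        constructor
        · by_contra hge
          push_neg at hge
          have hmono : Nat.nth P K ≤ Nat.nth P (Nat.count P i) :=
            (Nat.nth_le_nth hPinf).mpr hge
          rw [Nat.nth_count hiP'] at hmono
          omega
        · show ω (Nat.nth P (Nat.count P i)) = true
          rw [Nat.nth_count hiP']
          exact hiω
    have hones : ∀ K, Ville.selTrue (f j) (Ville.W f (Nat.nth P K))
        = ((Finset.range K).filter (fun k => SelectedSeq s ω k = true)).card := by
      intro K
      rw [Ville.selTrue_W, hj, hcard K]
    have hrel : ∀ K, ((Ville.Dr (f j) (Ville.W f (Nat.nth P K)) : ℤ) : ℝ)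
        = K - 2 * (((Finset.range K).filter (fun k => SelectedSeq s ω k = true)).card : ℝ) := by
      intro K
      have h1 := Ville.Dr_eq_counts (f j) (Ville.W f (Nat.nth P K))
      rw [hselK, hones] at h1
      have : ((Ville.Dr (f j) (Ville.W f (Nat.nth P K)) : ℤ) : ℝ)
          = ((K : ℤ) - 2 * (((Finset.range K).filter
              (fun k => SelectedSeq s ω k = true)).card : ℤ) : ℤ) := by
        exact_mod_cast congrArg (fun z : ℤ => (z : ℝ)) h1
      rw [this]
      push_cast
      ring
    have := Ville.tendsto_half (fun K => Ville.Dr (f j) (Ville.W f (Nat.nth P K)))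
      (fun K => ((Finset.range K).filter (fun k => SelectedSeq s ω k = true)).card)
      htend hrel
    rw [LimitFreq]
    convert this using 2
  · -- ballot property
    intro n
    have h1 := Ville.Dg_W_nonneg f n
    rw [Ville.Dg] at h1
    have h2 := Ville.count_W f false n
    have h3 := Ville.count_W f true n
    have h4 : ((Finset.range n).filter fun i => ω i = true).card
        = (Ville.W f n).count true := h3.symm
    have h5 : ((Finset.range n).filter fun i => ω i = false).card
        = (Ville.W f n).count false := h2.symm
    rw [h4, h5]
    omega
end

section
/- For every martingale m, the set of all sequences ω : ℕ → Bool against which m wins is a null set for the uniform measure on the Cantor space ℕ → Bool. -/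
open Filter MeasureTheory Set
open scoped ENNReal

lemma prefixFn_length (ω : ℕ → Bool) (n : ℕ) : (prefixFn ω n).length = n := by
  simp [prefixFn]

lemma prefixFn_take (ω : ℕ → Bool) {k n : ℕ} (h : k ≤ n) :
    (prefixFn ω n).take k = prefixFn ω k := by
  apply List.ext_getElem
  · simp [prefixFn, h]
  · intro i h1 h2
    simp [prefixFn]

lemma key_lemma (m : List Bool → ℝ) (hm : IsMartingale m) :
    ∀ (n : ℕ) (F : Finset (List Bool)) (C : ℝ) (x : List Bool),
      0 ≤ C →
      (∀ w ∈ F, w.length ≤ n) →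
      (∀ w ∈ F, ∀ v ∈ F, w <+: v → w = v) →
      (∀ w ∈ F, C ≤ m (x ++ w)) →
      C * ∑ w ∈ F, ((2:ℝ) ^ w.length)⁻¹ ≤ m x := by
  intro n
  induction n with
  | zero =>
    intro F C x hC hlen hpf hval
    rcases F.eq_empty_or_nonempty with rfl | ⟨w, hw⟩
    · simpa using hm.1 x
    · have hw0 : w = [] := List.length_eq_zero_iff.mp (Nat.le_zero.mp (hlen w hw))
      subst hw0
      have hF : F = {[]} := by
        apply Finset.eq_singleton_iff_unique_mem.mpr
        exact ⟨hw, fun v hv => (hpf [] hw v hv (List.nil_prefix)).symm⟩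
      subst hF
      simpa using hval [] hw
  | succ n ih =>
    intro F C x hC hlen hpf hval
    by_cases hnil : [] ∈ F
    · have hF : F = {[]} := by
        apply Finset.eq_singleton_iff_unique_mem.mpr
        exact ⟨hnil, fun v hv => (hpf [] hnil v hv (List.nil_prefix)).symm⟩
      subst hF
      simpa using hval [] hnil
    · -- all elements nonempty; split by head
      set Fb : Bool → Finset (List Bool) := fun b =>
        (F.filter fun w => w.head? = some b).image List.tail with hFb
      have hmem : ∀ b u, u ∈ Fb b ↔ (b :: u) ∈ F := by
        intro b u
        simp only [hFb, Finset.mem_image, Finset.mem_filter]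
        constructor
        · rintro ⟨w, ⟨hwF, hwh⟩, rfl⟩
          rwa [List.cons_head?_tail hwh]
        · intro h
          exact ⟨b :: u, ⟨h, rfl⟩, rfl⟩
      have hIH : ∀ b : Bool, C * ∑ u ∈ Fb b, ((2:ℝ) ^ u.length)⁻¹ ≤ m (x ++ [b]) := by
        intro b
        apply ih (Fb b) C (x ++ [b]) hC
        · intro u hu
          have := hlen _ ((hmem b u).mp hu)
          simp at this; omega
        · intro u hu v hv huv
          have h2 := hpf _ ((hmem b u).mp hu) _ ((hmem b v).mp hv)
            (List.cons_prefix_cons.mpr ⟨rfl, huv⟩)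
          injection h2
        · intro u hu
          have := hval _ ((hmem b u).mp hu)
          simpa [List.append_assoc] using this
      have hsplit : ∑ w ∈ F, ((2:ℝ) ^ w.length)⁻¹ =
          (∑ u ∈ Fb false, ((2:ℝ) ^ u.length)⁻¹) / 2 +
          (∑ u ∈ Fb true, ((2:ℝ) ^ u.length)⁻¹) / 2 := by
        have hfsum : ∀ b : Bool, ∑ w ∈ F.filter (fun w => w.head? = some b), ((2:ℝ) ^ w.length)⁻¹
            = (∑ u ∈ Fb b, ((2:ℝ) ^ u.length)⁻¹) / 2 := by
          intro b
          rw [Finset.sum_div]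
          rw [hFb]
          rw [Finset.sum_image (by
            intro w hw v hv htl
            rw [Finset.mem_coe, Finset.mem_filter] at hw hv
            rw [← List.cons_head?_tail hw.2, ← List.cons_head?_tail hv.2, htl])]
          apply Finset.sum_congr rfl
          intro w hw
          rw [Finset.mem_filter] at hw
          rw [← List.cons_head?_tail hw.2]
          simp [pow_succ]
          ring
        rw [← hfsum false, ← hfsum true, ← Finset.sum_filter_add_sum_filter_not F (fun w => w.head? = some false)]
        congr 1
        apply Finset.sum_congr _ (fun _ _ => rfl)
        apply Finset.filter_congr
        intro w hw
        have hne : w ≠ [] := fun h => hnil (h ▸ hw)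
        rcases w with _ | ⟨b, t⟩
        · exact absurd rfl hne
        · cases b <;> simp
      rw [hsplit]
      have := hm.2 x
      have h0 := hIH false
      have h1 := hIH true
      nlinarith [hIH false, hIH true]

lemma measure_bound (m : List Bool → ℝ) (hm : IsMartingale m)
    (μ : Measure (ℕ → Bool)) (hμ : IsUniformMeasure μ) (C : ℝ) (hC : 0 < C) :
    μ {ω | ∃ n, C < m (prefixFn ω n)} ≤ ENNReal.ofReal (m [] / C) := by
  set Hit : Set (List Bool) := {w | C < m w ∧ ∀ k < w.length, m (w.take k) ≤ C} with hHit
  have hcov : {ω | ∃ n, C < m (prefixFn ω n)} ⊆ ⋃ w ∈ Hit, cyl w := by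
    intro ω hω
    have hn := Nat.find_spec hω
    refine mem_iUnion₂.mpr ⟨prefixFn ω (Nat.find hω), ⟨?_, ?_⟩, ?_⟩
    · exact hn
    · intro k hk
      rw [prefixFn_length] at hk
      rw [prefixFn_take ω hk.le]
      exact not_lt.mp (Nat.find_min hω hk)
    · show prefixFn ω (prefixFn ω (Nat.find hω)).length = _
      rw [prefixFn_length]
  have hpf : ∀ w ∈ Hit, ∀ v ∈ Hit, w <+: v → w = v := by
    intro w hw v hv hwv
    by_contra hne
    have hlt : w.length < v.length := by
      rcases lt_or_eq_of_le hwv.length_le with h' | h'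
      · exact h'
      · exact absurd (List.IsPrefix.eq_of_length hwv h') hne
    have := hv.2 w.length hlt
    rw [← List.prefix_iff_eq_take.mp hwv] at this
    exact absurd this (not_le.mpr hw.1)
  calc μ {ω | ∃ n, C < m (prefixFn ω n)} ≤ μ (⋃ w ∈ Hit, cyl w) := measure_mono hcov
    _ ≤ ∑' w : Hit, μ (cyl w) := measure_biUnion_le μ (Set.to_countable Hit) _
    _ = ∑' w : Hit, ((2:ℝ≥0∞) ^ (w : List Bool).length)⁻¹ := by
        exact tsum_congr fun w => hμ w
    _ ≤ ENNReal.ofReal (m [] / C) := by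
        rw [ENNReal.tsum_eq_iSup_sum]
        apply iSup_le
        intro F
        have hconv : ∀ w : Hit, ((2:ℝ≥0∞) ^ (w : List Bool).length)⁻¹
            = ENNReal.ofReal ((2:ℝ) ^ (w : List Bool).length)⁻¹ := by
          intro w
          rw [ENNReal.ofReal_inv_of_pos (by positivity), ENNReal.ofReal_pow (by norm_num)]
          norm_num
        simp_rw [hconv]
        rw [← ENNReal.ofReal_sum_of_nonneg (fun w _ => by positivity)]
        apply ENNReal.ofReal_le_ofReal
        have himg : ∑ w ∈ F, ((2:ℝ) ^ (w : List Bool).length)⁻¹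
            = ∑ w ∈ F.image Subtype.val, ((2:ℝ) ^ w.length)⁻¹ := by
          rw [Finset.sum_image (fun x _ y _ h => Subtype.ext h)]
        rw [le_div_iff₀ hC, mul_comm, himg]
        apply key_lemma m hm ((F.image Subtype.val).sup List.length) _ C []
        · exact hC.le
        · exact fun w hw => Finset.le_sup hw
        · intro w hw v hv
          simp only [Finset.mem_image] at hw hv
          obtain ⟨w', hw', rfl⟩ := hw
          obtain ⟨v', hv', rfl⟩ := hv
          exact hpf _ w'.2 _ v'.2
        · intro w hw
          simp only [Finset.mem_image] at hw
          obtain ⟨w', hw', rfl⟩ := hw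
          simpa using (w'.2.1).le


/-- For every martingale `m`, the set of sequences against which `m` wins is null for
the uniform measure on Cantor space. -/
theorem martingale_winning_set_null (m : List Bool → ℝ) (hm : IsMartingale m)
    (μ : Measure (ℕ → Bool)) (hμ : IsUniformMeasure μ) :
    μ {ω : ℕ → Bool | Wins m ω} = 0 := by
  refine le_antisymm ?_ zero_le
  refine ENNReal.le_of_forall_pos_le_add fun ε hε _ => ?_
  rw [zero_add]
  have hm0 : 0 ≤ m [] := hm.1 []
  set C : ℝ := (m [] + 1) / ε with hCdef
  have hC : 0 < C := by positivity
  have hsub : {ω : ℕ → Bool | Wins m ω} ⊆ {ω | ∃ n, C < m (prefixFn ω n)} :=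
    fun ω hω => hω C
  calc μ {ω : ℕ → Bool | Wins m ω} ≤ μ {ω | ∃ n, C < m (prefixFn ω n)} := measure_mono hsub
    _ ≤ ENNReal.ofReal (m [] / C) := measure_bound m hm μ hμ C hC
    _ ≤ (ε : ℝ≥0∞) := by
        rw [← ENNReal.ofReal_coe_nnreal]
        apply ENNReal.ofReal_le_ofReal
        rw [hCdef, div_div_eq_mul_div, div_le_iff₀ (by positivity)]
        have : (0:ℝ) < ε := hε
        nlinarith
end

section
/- For every subset X of the Cantor space ℕ → Bool whose outer measure with respect to the uniform measure is zero, there exists a martingale m that wins against every element of X. -/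
open Filter MeasureTheory Set
open scoped ENNReal

lemma prefixFn_succ (ω : ℕ → Bool) (n : ℕ) :
    prefixFn ω (n + 1) = prefixFn ω n ++ [ω n] := by
  simp only [prefixFn, List.ofFn_succ', List.concat_eq_append, Fin.coe_castSucc, Fin.val_last]

lemma mem_cyl_prefixFn {ω' ω : ℕ → Bool} {n : ℕ} :
    ω' ∈ cyl (prefixFn ω n) ↔ ∀ i < n, ω' i = ω i := by
  have h1 : ω' ∈ cyl (prefixFn ω n) ↔ (fun i : Fin n => ω' i) = fun i : Fin n => ω i := by
    simp only [cyl, mem_setOf_eq, prefixFn, List.length_ofFn]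
    rw [List.ofFn_inj]
    simp [Fin.coe_cast]
  rw [h1, funext_iff]
  exact ⟨fun h i hi => h ⟨i, hi⟩, fun h i => h i i.isLt⟩

lemma measurableSet_cyl (w : List Bool) : MeasurableSet (cyl w) := by
  have : cyl w = ⋂ i : Fin w.length, (fun ω : ℕ → Bool => ω i) ⁻¹' {w.get i} := by
    ext ω
    simp only [cyl, mem_setOf_eq, mem_iInter, mem_preimage, mem_singleton_iff]
    constructor
    · intro h i
      have := List.get_of_eq h.symm i
      simpa [prefixFn] using this.symm
    · intro h
      apply List.ext_get (by simp [prefixFn])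
      intro i h1 h2
      simpa [prefixFn] using h ⟨i, h2⟩
  rw [this]
  exact MeasurableSet.iInter fun i =>
    (measurable_pi_apply (i : ℕ)) (measurableSet_singleton _)

lemma mem_cyl_append {x : List Bool} {b : Bool} {ω : ℕ → Bool} :
    ω ∈ cyl (x ++ [b]) ↔ ω ∈ cyl x ∧ ω x.length = b := by
  simp only [cyl, mem_setOf_eq, List.length_append, List.length_singleton]
  rw [prefixFn_succ]
  constructor
  · intro h
    obtain ⟨h1, h2⟩ := List.append_inj' h rfl
    exact ⟨h1, by simpa using h2⟩
  · rintro ⟨h1, h2⟩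
    rw [h1, h2]

lemma cyl_split (x : List Bool) :
    cyl x = cyl (x ++ [false]) ∪ cyl (x ++ [true]) := by
  ext ω
  simp only [mem_union, mem_cyl_append]
  cases h : ω x.length <;> tauto

lemma cyl_disjoint (x : List Bool) :
    Disjoint (cyl (x ++ [false])) (cyl (x ++ [true])) := by
  rw [Set.disjoint_left]
  intro ω h0 h1
  have := (mem_cyl_append.mp h0).2
  have := (mem_cyl_append.mp h1).2
  simp_all

lemma exists_cyl_subset {U : Set (ℕ → Bool)} (hU : IsOpen U) {ω : ℕ → Bool} (hω : ω ∈ U) :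
    ∃ N, ∀ n, N ≤ n → cyl (prefixFn ω n) ⊆ U := by
  obtain ⟨I, u, hu, hsub⟩ := isOpen_pi_iff.mp hU ω hω
  refine ⟨I.sup id + 1, fun n hn ω' hω' => hsub ?_⟩
  intro i hi
  have hω'i : ω' i = ω i :=
    mem_cyl_prefixFn.mp hω' i (lt_of_lt_of_le (Nat.lt_succ_of_le (Finset.le_sup (f := id) hi)) hn)
  rw [hω'i]
  exact (hu i hi).2

/-- For every subset `X` of Cantor space of (outer) uniform measure zero there is a
martingale that wins against every element of `X`. -/
theorem null_set_winning_martingale (μ : Measure (ℕ → Bool)) (hμ : IsUniformMeasure μ)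
    (X : Set (ℕ → Bool)) (hX : μ X = 0) :
    ∃ m : List Bool → ℝ, IsMartingale m ∧ ∀ ω ∈ X, Wins m ω := by
  classical
  have huniv : (univ : Set (ℕ → Bool)) = cyl [] := by
    ext ω
    simp [cyl, prefixFn, List.ofFn_zero]
  haveI : IsFiniteMeasure μ := by
    constructor
    rw [huniv, hμ []]
    simp
  -- get the open covers
  have hA : ∀ k : ℕ, ∃ U ⊇ X, IsOpen U ∧ μ U < ((2 : ℝ≥0∞) ^ k)⁻¹ := by
    intro k
    have h0 : μ (toMeasurable μ X) < ((2 : ℝ≥0∞) ^ k)⁻¹ := by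
      rw [measure_toMeasurable, hX]
      exact ENNReal.inv_pos.mpr (by simp)
    obtain ⟨U, hU1, hU2, hU3⟩ := Set.exists_isOpen_lt_of_lt (toMeasurable μ X) _ h0
    exact ⟨U, (subset_toMeasurable μ X).trans hU1, hU2, hU3⟩
  choose U hXU hUopen hUlt using hA
  -- the component martingales
  set mart : ℕ → List Bool → ℝ := fun k x =>
    (μ (U k ∩ cyl x)).toReal * 2 ^ x.length with hmart
  have hfin : ∀ k (x : List Bool), μ (U k ∩ cyl x) ≠ ∞ := fun k x =>
    measure_ne_top μ _
  have hnn : ∀ k x, 0 ≤ mart k x := fun k x =>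
    mul_nonneg ENNReal.toReal_nonneg (by positivity)
  have hbound : ∀ k x, mart k x ≤ (2 : ℝ) ^ x.length * (1 / 2) ^ k := by
    intro k x
    rw [hmart]
    have h1 : (μ (U k ∩ cyl x)).toReal ≤ (1 / 2 : ℝ) ^ k := by
      have h2 : μ (U k ∩ cyl x) ≤ ((2 : ℝ≥0∞) ^ k)⁻¹ :=
        le_trans (measure_mono inter_subset_left) (hUlt k).le
      calc (μ (U k ∩ cyl x)).toReal ≤ (((2 : ℝ≥0∞) ^ k)⁻¹).toReal :=
            ENNReal.toReal_mono (by simp) h2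
        _ = (1 / 2 : ℝ) ^ k := by
            simp [ENNReal.toReal_inv, ENNReal.toReal_pow, inv_pow, one_div]
    calc (μ (U k ∩ cyl x)).toReal * 2 ^ x.length
        ≤ (1 / 2 : ℝ) ^ k * 2 ^ x.length := by
          apply mul_le_mul_of_nonneg_right h1 (by positivity)
      _ = (2 : ℝ) ^ x.length * (1 / 2) ^ k := by ring
  have hsum : ∀ x, Summable fun k => mart k x := by
    intro x
    exact Summable.of_nonneg_of_le (fun k => hnn k x) (fun k => hbound k x)
      ((summable_geometric_of_lt_one (by norm_num) (by norm_num)).mul_left _)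
  refine ⟨fun x => ∑' k, mart k x, ⟨fun x => tsum_nonneg (fun k => hnn k x), ?_⟩, ?_⟩
  · -- martingale equality
    intro x
    have key : ∀ k, mart k (x ++ [false]) + mart k (x ++ [true]) = 2 * mart k x := by
      intro k
      have hsplit : μ (U k ∩ cyl x)
          = μ (U k ∩ cyl (x ++ [false])) + μ (U k ∩ cyl (x ++ [true])) := by
        rw [← measure_union ?_ ((hUopen k).measurableSet.inter (measurableSet_cyl _))]
        · rw [← inter_union_distrib_left, ← cyl_split]
        · exact (cyl_disjoint x).mono inter_subset_right inter_subset_right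
      have htR : (μ (U k ∩ cyl x)).toReal
          = (μ (U k ∩ cyl (x ++ [false]))).toReal + (μ (U k ∩ cyl (x ++ [true]))).toReal := by
        rw [hsplit, ENNReal.toReal_add (hfin _ _) (hfin _ _)]
      rw [hmart]
      simp only [List.length_append, List.length_singleton]
      rw [htR]
      ring
    show ∑' k, mart k x = (∑' k, mart k (x ++ [false]) + ∑' k, mart k (x ++ [true])) / 2
    rw [← Summable.tsum_add (hsum (x ++ [false])) (hsum (x ++ [true]))]
    rw [tsum_congr key, tsum_mul_left]
    ring
  · -- winning
    intro ω hω C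
    obtain ⟨K, hK⟩ := exists_nat_gt C
    have hωU : ∀ k, ω ∈ U k := fun k => hXU k hω
    choose N hN using fun k => exists_cyl_subset (hUopen k) (hωU k)
    set n := (Finset.range K).sup N with hn
    refine ⟨n, lt_of_lt_of_le hK ?_⟩
    have hone : ∀ k < K, mart k (prefixFn ω n) = 1 := by
      intro k hk
      have hsub : cyl (prefixFn ω n) ⊆ U k :=
        hN k n (Finset.le_sup (f := N) (Finset.mem_range.mpr hk))
      have : μ (U k ∩ cyl (prefixFn ω n)) = ((2 : ℝ≥0∞) ^ n)⁻¹ := by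
        rw [inter_eq_self_of_subset_right hsub, hμ, prefixFn_length]
      rw [hmart]
      simp only [this, prefixFn_length]
      rw [ENNReal.toReal_inv, ENNReal.toReal_pow]
      norm_num
    calc (K : ℝ) = ∑ k ∈ Finset.range K, mart k (prefixFn ω n) := by
          rw [Finset.sum_congr rfl fun k hk => hone k (Finset.mem_range.mp hk)]
          simp
      _ ≤ ∑' k, mart k (prefixFn ω n) :=
          Summable.sum_le_tsum _ (fun k _ => hnn k _) (hsum _)
end

section
/- Martingales generalize selection rules: for every selection rule s there exists a martingale m such that m wins against every sequence ω : ℕ → Bool for which the subsequence selected by s from ω is infinite and does not have limit frequency 1/2. -/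
open Filter MeasureTheory Set
open scoped ENNReal

namespace MGS

noncomputable def mrev (b : List Bool → ℝ) : List Bool → ℝ
  | [] => 1
  | c :: r => mrev b r * (1 + if c then b r.reverse else - b r.reverse)

noncomputable def mart (b : List Bool → ℝ) (x : List Bool) : ℝ := mrev b x.reverse

lemma mart_nil (b : List Bool → ℝ) : mart b [] = 1 := rfl

lemma mart_append (b : List Bool → ℝ) (x : List Bool) (c : Bool) :
    mart b (x ++ [c]) = mart b x * (1 + if c then b x else - b x) := by
  simp [mart, List.reverse_append, mrev]

lemma mrev_nonneg {b : List Bool → ℝ} (hb : ∀ x, |b x| ≤ 1) : ∀ l, 0 ≤ mrev b l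
  | [] => zero_le_one
  | c :: r => by
    have h := abs_le.1 (hb r.reverse)
    refine mul_nonneg (mrev_nonneg hb r) ?_
    cases c <;> simp <;> linarith [h.1, h.2]

lemma mrev_le {b : List Bool → ℝ} (hb : ∀ x, |b x| ≤ 1) :
    ∀ l : List Bool, mrev b l ≤ 2 ^ l.length
  | [] => by simp [mrev]
  | c :: r => by
    have h := abs_le.1 (hb r.reverse)
    have h1 := mrev_nonneg hb r
    have h2 := mrev_le hb r
    have h3 : (1 + if c then b r.reverse else - b r.reverse) ≤ 2 := by
      cases c <;> simp <;> linarith [h.1, h.2]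
    have h4 : (0:ℝ) ≤ (1 + if c then b r.reverse else - b r.reverse) := by
      cases c <;> simp <;> linarith [h.1, h.2]
    calc mrev b (c :: r) = mrev b r * (1 + if c then b r.reverse else - b r.reverse) := rfl
      _ ≤ 2 ^ r.length * 2 := mul_le_mul h2 h3 h4 (by positivity)
      _ = 2 ^ (c :: r).length := by rw [List.length_cons, pow_succ]

lemma mart_nonneg {b : List Bool → ℝ} (hb : ∀ x, |b x| ≤ 1) (x : List Bool) :
    0 ≤ mart b x := mrev_nonneg hb _

lemma mart_le {b : List Bool → ℝ} (hb : ∀ x, |b x| ≤ 1) (x : List Bool) :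
    mart b x ≤ 2 ^ x.length := by
  simpa [mart] using mrev_le hb x.reverse

lemma mart_fair (b : List Bool → ℝ) (x : List Bool) :
    mart b x = (mart b (x ++ [false]) + mart b (x ++ [true])) / 2 := by
  rw [mart_append, mart_append]; simp; ring

lemma prefixFn_succ (ω : ℕ → Bool) (n : ℕ) :
    prefixFn ω (n + 1) = prefixFn ω n ++ [ω n] := by
  unfold prefixFn
  rw [List.ofFn_succ', List.concat_eq_append]
  norm_num

lemma mart_prefix (s : List Bool → Bool) (ω : ℕ → Bool) (β : ℝ) (n : ℕ) :
    mart (fun x => if s x = true then β else 0) (prefixFn ω n)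
      = (1 + β) ^ (Nat.count (fun i => s (prefixFn ω i) = true ∧ ω i = true) n)
        * (1 - β) ^ (Nat.count (fun i => s (prefixFn ω i) = true ∧ ω i = false) n) := by
  induction n with
  | zero => rw [Nat.count_zero, Nat.count_zero]; simp [prefixFn, mart_nil]
  | succ n ih =>
    rw [prefixFn_succ, mart_append, ih, Nat.count_succ, Nat.count_succ]
    cases hs : s (prefixFn ω n) <;> cases hw : ω n <;>
      simp [hs, hw, pow_succ] <;> ring

lemma count_sel (s : List Bool → Bool) (ω : ℕ → Bool) (n : ℕ) :
    Nat.count (fun j => ω (Nat.nth (fun i => s (prefixFn ω i) = true) j) = true)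
        (Nat.count (fun i => s (prefixFn ω i) = true) n)
      = Nat.count (fun i => s (prefixFn ω i) = true ∧ ω i = true) n := by
  induction n with
  | zero => simp
  | succ n ih =>
    rw [Nat.count_succ (fun i => s (prefixFn ω i) = true),
        Nat.count_succ (fun i => s (prefixFn ω i) = true ∧ ω i = true)]
    cases hs : s (prefixFn ω n)
    · simp [hs, ih]
    · have hnth : Nat.nth (fun i => s (prefixFn ω i) = true)
          (Nat.count (fun i => s (prefixFn ω i) = true) n) = n := Nat.nth_count hs
      rw [if_pos rfl, Nat.count_succ, hnth, ih]
      simp [hs]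

lemma count_split (s : List Bool → Bool) (ω : ℕ → Bool) (n : ℕ) :
    Nat.count (fun i => s (prefixFn ω i) = true ∧ ω i = true) n
      + Nat.count (fun i => s (prefixFn ω i) = true ∧ ω i = false) n
      = Nat.count (fun i => s (prefixFn ω i) = true) n := by
  induction n with
  | zero => simp
  | succ n ih =>
    rw [Nat.count_succ, Nat.count_succ, Nat.count_succ]
    cases hs : s (prefixFn ω n) <;> cases hw : ω n <;> simp [hs, hw] <;> omega

lemma Dpos {p : ℝ} (h1 : 1/2 < p) (h2 : p < 1) :
    0 < Real.log 2 + p * Real.log p + (1 - p) * Real.log (1 - p) := by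
  have hx : p ∈ Set.Ici (0:ℝ) := Set.mem_Ici.2 (by linarith)
  have hy : 1 - p ∈ Set.Ici (0:ℝ) := Set.mem_Ici.2 (by linarith)
  have hxy : p ≠ 1 - p := by intro h; linarith
  have hc := Real.strictConvexOn_mul_log.2 hx hy hxy one_half_pos one_half_pos
    (by norm_num : (1:ℝ)/2 + 1/2 = 1)
  simp only [smul_eq_mul] at hc
  have he : (1:ℝ)/2 * p + 1/2 * (1 - p) = 1/2 := by ring
  rw [he] at hc
  have hl : Real.log (1/2) = - Real.log 2 := by rw [one_div, Real.log_inv]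
  rw [hl] at hc
  nlinarith [hc]

lemma key {p : ℝ} (h1 : 1/2 < p) (h2 : p < 1) {T M : ℕ} (hTM : T ≤ M)
    (h : p * M ≤ T) :
    Real.exp (M * (Real.log 2 + p * Real.log p + (1 - p) * Real.log (1 - p)))
      ≤ (2*p) ^ T * (2*(1-p)) ^ (M - T) := by
  have hp0 : 0 < p := by linarith
  have hq0 : 0 < 1 - p := by linarith
  have h2p : (0:ℝ) < 2*p := by linarith
  have h2q : (0:ℝ) < 2*(1-p) := by linarith
  have hcast : ((M - T : ℕ) : ℝ) = (M : ℝ) - T := by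
    rw [Nat.cast_sub hTM]
  calc Real.exp (M * (Real.log 2 + p * Real.log p + (1 - p) * Real.log (1 - p)))
      ≤ Real.exp (T * Real.log (2*p) + ((M - T : ℕ) : ℝ) * Real.log (2*(1-p))) := by
        apply Real.exp_le_exp.2
        rw [hcast, Real.log_mul (by norm_num) hp0.ne', Real.log_mul (by norm_num) hq0.ne']
        have hAB : Real.log (2*(1-p)) ≤ Real.log (2*p) :=
          (Real.log_le_log_iff h2q h2p).2 (by linarith)
        rw [Real.log_mul (by norm_num) hp0.ne', Real.log_mul (by norm_num) hq0.ne'] at hAB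
        nlinarith [mul_nonneg (sub_nonneg.2 h) (sub_nonneg.2 hAB)]
    _ = (2*p) ^ T * (2*(1-p)) ^ (M - T) := by
        rw [Real.exp_add, Real.exp_nat_mul, Real.exp_nat_mul, Real.exp_log h2p,
          Real.exp_log h2q]

noncomputable def bP (s : List Bool → Bool) (k : ℕ) : List Bool → ℝ :=
  fun x => if s x = true then 2 / ((k:ℝ) + 3) else 0

noncomputable def bM (s : List Bool → Bool) (k : ℕ) : List Bool → ℝ :=
  fun x => if s x = true then -(2 / ((k:ℝ) + 3)) else 0

lemma beta_pos (k : ℕ) : 0 < 2 / ((k:ℝ) + 3) := by positivity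

lemma beta_le (k : ℕ) : 2 / ((k:ℝ) + 3) ≤ 1 := by
  rw [div_le_one (by positivity)]
  have := Nat.cast_nonneg (α := ℝ) k
  linarith

lemma bP_abs (s : List Bool → Bool) (k : ℕ) : ∀ x, |bP s k x| ≤ 1 := by
  intro x
  simp only [bP]
  split_ifs
  · rw [abs_of_nonneg (beta_pos k).le]; exact beta_le k
  · simp

lemma bM_abs (s : List Bool → Bool) (k : ℕ) : ∀ x, |bM s k x| ≤ 1 := by
  intro x
  simp only [bM]
  split_ifs
  · rw [abs_neg, abs_of_nonneg (beta_pos k).le]; exact beta_le k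
  · simp

noncomputable def bigM (s : List Bool → Bool) (x : List Bool) : ℝ :=
  ∑' k : ℕ, (1/2:ℝ)^k * (mart (bP s k) x + mart (bM s k) x)

lemma summable_bigM (s : List Bool → Bool) (x : List Bool) :
    Summable (fun k => (1/2:ℝ)^k * (mart (bP s k) x + mart (bM s k) x)) := by
  apply Summable.of_nonneg_of_le
    (fun k => mul_nonneg (by positivity)
      (add_nonneg (mart_nonneg (bP_abs s k) x) (mart_nonneg (bM_abs s k) x)))
    (fun k => ?_) (summable_geometric_two.mul_right ((2:ℝ) ^ x.length * 2))
  calc (1/2:ℝ)^k * (mart (bP s k) x + mart (bM s k) x)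
      ≤ (1/2:ℝ)^k * ((2:ℝ) ^ x.length + 2 ^ x.length) :=
        mul_le_mul_of_nonneg_left
          (add_le_add (mart_le (bP_abs s k) x) (mart_le (bM_abs s k) x)) (by positivity)
    _ = (1/2:ℝ)^k * ((2:ℝ) ^ x.length * 2) := by ring

lemma bigM_isMartingale (s : List Bool → Bool) : IsMartingale (bigM s) := by
  constructor
  · intro x
    exact tsum_nonneg fun k => mul_nonneg (by positivity)
      (add_nonneg (mart_nonneg (bP_abs s k) x) (mart_nonneg (bM_abs s k) x))
  · intro x
    have e : bigM s (x ++ [false]) + bigM s (x ++ [true]) = 2 * bigM s x := by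
      rw [bigM, bigM, ← Summable.tsum_add (summable_bigM s _) (summable_bigM s _), bigM,
        ← tsum_mul_left]
      congr 1
      funext k
      have hp := mart_fair (bP s k) x
      have hm := mart_fair (bM s k) x
      rw [hp, hm]
      ring
    rw [e]; ring

lemma le_bigM_P (s : List Bool → Bool) (k : ℕ) (x : List Bool) :
    (1/2:ℝ)^k * mart (bP s k) x ≤ bigM s x := by
  calc (1/2:ℝ)^k * mart (bP s k) x
      ≤ (1/2:ℝ)^k * (mart (bP s k) x + mart (bM s k) x) :=
        mul_le_mul_of_nonneg_left (le_add_of_nonneg_right (mart_nonneg (bM_abs s k) x))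
          (by positivity)
    _ ≤ bigM s x := Summable.le_tsum (summable_bigM s x) k fun j _ =>
        mul_nonneg (by positivity)
          (add_nonneg (mart_nonneg (bP_abs s j) x) (mart_nonneg (bM_abs s j) x))

lemma le_bigM_M (s : List Bool → Bool) (k : ℕ) (x : List Bool) :
    (1/2:ℝ)^k * mart (bM s k) x ≤ bigM s x := by
  calc (1/2:ℝ)^k * mart (bM s k) x
      ≤ (1/2:ℝ)^k * (mart (bP s k) x + mart (bM s k) x) :=
        mul_le_mul_of_nonneg_left (le_add_of_nonneg_left (mart_nonneg (bP_abs s k) x))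
          (by positivity)
    _ ≤ bigM s x := Summable.le_tsum (summable_bigM s x) k fun j _ =>
        mul_nonneg (by positivity)
          (add_nonneg (mart_nonneg (bP_abs s j) x) (mart_nonneg (bM_abs s j) x))

end MGS

/-- **Martingales generalize selection rules.** For every selection rule `s` there is a
martingale winning against every sequence whose `s`-selected subsequence is infinite and
does not have limit frequency `1/2`. -/
theorem martingale_generalizes_selection (s : List Bool → Bool) :
    ∃ m : List Bool → ℝ, IsMartingale m ∧
      ∀ ω : ℕ → Bool, (SelectedIndices s ω).Infinite →
        ¬ LimitFreq (SelectedSeq s ω) (1 / 2) → Wins m ω := by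
  classical
  refine ⟨MGS.bigM s, MGS.bigM_isMartingale s, ?_⟩
  intro ω hinf hnot
  have hinf' : {i | s (prefixFn ω i) = true}.Infinite := hinf
  simp only [LimitFreq, Metric.tendsto_atTop] at hnot
  push_neg at hnot
  obtain ⟨ε, hε, hfreq⟩ := hnot
  set k : ℕ := ⌈ε⁻¹⌉₊ with hk
  have hδε : 1/((k:ℝ)+3) ≤ ε := by
    have h1 : ε⁻¹ ≤ (k:ℝ) := Nat.le_ceil _
    have h2 : ε⁻¹ ≤ (k:ℝ) + 3 := by linarith
    rw [div_le_iff₀ (by positivity : (0:ℝ) < (k:ℝ)+3)]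
    have h3 : ε * ε⁻¹ ≤ ε * ((k:ℝ)+3) := mul_le_mul_of_nonneg_left h2 hε.le
    rwa [mul_inv_cancel₀ hε.ne'] at h3
  set pp : ℝ := 1/2 + 1/((k:ℝ)+3) with hppdef
  have hδ0 : 0 < 1/((k:ℝ)+3) := by positivity
  have hδ3 : 1/((k:ℝ)+3) ≤ 1/3 := by
    apply one_div_le_one_div_of_le (by norm_num)
    have := Nat.cast_nonneg (α := ℝ) k
    linarith
  have hpp1 : 1/2 < pp := by rw [hppdef]; linarith
  have hpp2 : pp < 1 := by rw [hppdef]; linarith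
  set D : ℝ := Real.log 2 + pp * Real.log pp + (1 - pp) * Real.log (1 - pp) with hDdef
  have hD : 0 < D := MGS.Dpos hpp1 hpp2
  have h2pp : 1 + 2/((k:ℝ)+3) = 2 * pp := by rw [hppdef]; ring
  have h2q : 1 - 2/((k:ℝ)+3) = 2 * (1 - pp) := by rw [hppdef]; ring
  intro C
  obtain ⟨M, hMM₀, hdist⟩ := hfreq (max 1 (⌈(2^k * C)/D⌉₊ + 1))
  have hM1 : 1 ≤ M := le_trans (le_max_left _ _) hMM₀
  have hM0 : (0:ℝ) < M := by exact_mod_cast hM1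
  have hMD : 2^k * C < Real.exp (M * D) := by
    have h2 : (⌈(2^k*C)/D⌉₊ + 1 : ℕ) ≤ M := le_trans (le_max_right _ _) hMM₀
    have h3 : ((2:ℝ)^k * C)/D < M := by
      have h4 := Nat.le_ceil ((2^k * C)/D)
      have h5 : ((⌈(2^k*C)/D⌉₊ + 1 : ℕ) : ℝ) ≤ M := by exact_mod_cast h2
      push_cast at h5
      linarith
    rw [div_lt_iff₀ hD] at h3
    calc (2:ℝ)^k * C < M * D := h3
      _ < M * D + 1 := by linarith
      _ ≤ Real.exp (M * D) := Real.add_one_le_exp _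
  set n : ℕ := Nat.nth (fun i => s (prefixFn ω i) = true) M with hn
  have hcount : Nat.count (fun i => s (prefixFn ω i) = true) n = M :=
    Nat.count_nth_of_infinite hinf' M
  set T : ℕ := Nat.count (fun i => s (prefixFn ω i) = true ∧ ω i = true) n with hT
  set F : ℕ := Nat.count (fun i => s (prefixFn ω i) = true ∧ ω i = false) n with hF
  have hTF : T + F = M := by rw [hT, hF, MGS.count_split s ω n, hcount]
  have hTle : T ≤ M := by omega
  have hsel : Nat.count
      (fun j => ω (Nat.nth (fun i => s (prefixFn ω i) = true) j) = true) M = T := by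
    have := MGS.count_sel s ω n
    rwa [hcount] at this
  have hcard : (((Finset.range M).filter fun i => SelectedSeq s ω i = true).card) = T := by
    rw [← hsel, Nat.count_eq_card_filter_range]
    rfl
  rw [Real.dist_eq, hcard] at hdist
  have hcastsub : ((M - T : ℕ) : ℝ) = (M:ℝ) - T := by
    rw [Nat.cast_sub hTle]
  rcases le_abs.1 hdist with hc | hc
  · -- high frequency: use plus martingale
    have hppT : pp * M ≤ T := by
      have h6 : (1/2 + ε) * M ≤ T := by
        rw [← le_div_iff₀ hM0]
        linarith
      have h7 : pp * (M:ℝ) ≤ (1/2+ε) * M :=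
        mul_le_mul_of_nonneg_right (by rw [hppdef]; linarith) hM0.le
      exact h7.trans h6
    have hkey := MGS.key hpp1 hpp2 hTle hppT
    have hm1 : MGS.mart (MGS.bP s k) (prefixFn ω n)
        = (2*pp)^T * (2*(1-pp))^(M - T) := by
      have h7 := MGS.mart_prefix s ω (2/((k:ℝ)+3)) n
      rw [h2pp, h2q, ← hT, ← hF] at h7
      rw [show F = M - T from by omega] at h7
      exact h7
    refine ⟨n, ?_⟩
    have h8 : Real.exp (M * D) ≤ MGS.mart (MGS.bP s k) (prefixFn ω n) := by
      rw [hm1]; exact hkey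
    have hpow : (1/2:ℝ)^k * 2^k = 1 := by
      rw [← mul_pow]; norm_num
    calc C = (1/2:ℝ)^k * (2^k * C) := by rw [← mul_assoc, hpow, one_mul]
      _ < (1/2:ℝ)^k * Real.exp (M * D) := by
          apply mul_lt_mul_of_pos_left hMD (by positivity)
      _ ≤ (1/2:ℝ)^k * MGS.mart (MGS.bP s k) (prefixFn ω n) :=
          mul_le_mul_of_nonneg_left h8 (by positivity)
      _ ≤ MGS.bigM s (prefixFn ω n) := MGS.le_bigM_P s k (prefixFn ω n)
  · -- low frequency: use minus martingale
    have hppT : pp * M ≤ ((M - T : ℕ) : ℝ) := by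
      have h6 : (T:ℝ) ≤ (1/2 - ε) * M := by
        rw [← div_le_iff₀ hM0]
        linarith
      rw [hcastsub]
      have h7 : pp * (M:ℝ) ≤ (1/2+ε) * M :=
        mul_le_mul_of_nonneg_right (by rw [hppdef]; linarith) hM0.le
      exact h7.trans (by linarith : (1/2+ε) * (M:ℝ) ≤ (M:ℝ) - T)
    have hkey := MGS.key hpp1 hpp2 (Nat.sub_le M T) hppT
    rw [Nat.sub_sub_self hTle] at hkey
    have hm1 : MGS.mart (MGS.bM s k) (prefixFn ω n)
        = (2*(1-pp))^T * (2*pp)^(M - T) := by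
      have h7 := MGS.mart_prefix s ω (-(2/((k:ℝ)+3))) n
      rw [show (1 + -(2/((k:ℝ)+3))) = 1 - 2/((k:ℝ)+3) from by ring,
        show (1 - -(2/((k:ℝ)+3))) = 1 + 2/((k:ℝ)+3) from by ring, h2pp, h2q,
        ← hT, ← hF] at h7
      rw [show F = M - T from by omega] at h7
      exact h7
    refine ⟨n, ?_⟩
    have h8 : Real.exp (M * D) ≤ MGS.mart (MGS.bM s k) (prefixFn ω n) := by
      rw [hm1]; exact hkey.trans_eq (mul_comm _ _)
    have hpow : (1/2:ℝ)^k * 2^k = 1 := by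
      rw [← mul_pow]; norm_num
    calc C = (1/2:ℝ)^k * (2^k * C) := by rw [← mul_assoc, hpow, one_mul]
      _ < (1/2:ℝ)^k * Real.exp (M * D) := by
          apply mul_lt_mul_of_pos_left hMD (by positivity)
      _ ≤ (1/2:ℝ)^k * MGS.mart (MGS.bM s k) (prefixFn ω n) :=
          mul_le_mul_of_nonneg_left h8 (by positivity)
      _ ≤ MGS.bigM s (prefixFn ω n) := MGS.le_bigM_M s k (prefixFn ω n)
end

section
/- Finite Ville inequality: for every martingale m with m [] = 1, every natural number N, and every real C > 0, the number of strings x ∈ List Bool of length N that have some prefix y with m y ≥ C is at most 2^N / C. -/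
open Filter MeasureTheory Set
open scoped ENNReal

lemma len_finite (n : ℕ) : {z : List Bool | z.length = n}.Finite :=
  List.finite_length_eq Bool n

lemma len_card_le (n : ℕ) : ({z : List Bool | z.length = n}.ncard : ℝ) ≤ 2 ^ n := by
  induction n with
  | zero =>
    have : {z : List Bool | z.length = 0} = {([] : List Bool)} := by
      ext z; simp [List.length_eq_zero_iff]
    simp [this]
  | succ n ih =>
    have hsub : {z : List Bool | z.length = n + 1} ⊆
        (fun z => false :: z) '' {z | z.length = n} ∪
        (fun z => true :: z) '' {z | z.length = n} := by
      rintro z hz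
      match z, hz with
      | b :: z', hz =>
        have hz' : z'.length = n := by simpa using hz
        cases b
        · exact Or.inl ⟨z', hz', rfl⟩
        · exact Or.inr ⟨z', hz', rfl⟩
    have hf := len_finite n
    have h1 : ((fun z => false :: z) '' {z : List Bool | z.length = n}).ncard
        = {z : List Bool | z.length = n}.ncard :=
      Set.ncard_image_of_injective _ (fun a b h => by simpa using h)
    have h2 : ((fun z => true :: z) '' {z : List Bool | z.length = n}).ncard
        = {z : List Bool | z.length = n}.ncard :=
      Set.ncard_image_of_injective _ (fun a b h => by simpa using h)
    have hle := Set.ncard_le_ncard hsub ((hf.image _).union (hf.image _))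
    have hle2 := Set.ncard_union_le ((fun z => false :: z) '' {z : List Bool | z.length = n})
      ((fun z => true :: z) '' {z : List Bool | z.length = n})
    have hcast : ({z : List Bool | z.length = n + 1}.ncard : ℝ) ≤
        ({z : List Bool | z.length = n}.ncard : ℝ) + ({z : List Bool | z.length = n}.ncard : ℝ) := by
      have := le_trans hle hle2
      rw [h1, h2] at this
      exact_mod_cast this
    calc ({z : List Bool | z.length = n + 1}.ncard : ℝ)
        ≤ _ + _ := hcast
      _ ≤ 2 ^ n + 2 ^ n := by linarith
      _ = 2 ^ (n + 1) := by ring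

lemma key (m : List Bool → ℝ) (hm : IsMartingale m) (C : ℝ) (hC : 0 < C) :
    ∀ n x, C * (({z : List Bool | z.length = n ∧ ∃ y, y <+: z ∧ C ≤ m (x ++ y)}).ncard : ℝ)
      ≤ 2 ^ n * m x := by
  intro n
  induction n with
  | zero =>
    intro x
    by_cases h : C ≤ m x
    · have hsub : {z : List Bool | z.length = 0 ∧ ∃ y, y <+: z ∧ C ≤ m (x ++ y)} ⊆ {[]} := by
        rintro z ⟨hz, -⟩; simpa [List.length_eq_zero_iff] using hz
      have := Set.ncard_le_ncard hsub (Set.finite_singleton _)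
      simp only [Set.ncard_singleton] at this
      have h1 : (({z : List Bool | z.length = 0 ∧ ∃ y, y <+: z ∧ C ≤ m (x ++ y)}).ncard : ℝ) ≤ 1 := by
        exact_mod_cast this
      nlinarith
    · have hempty : {z : List Bool | z.length = 0 ∧ ∃ y, y <+: z ∧ C ≤ m (x ++ y)} = ∅ := by
        ext z
        simp only [Set.mem_setOf_eq, Set.mem_empty_iff_false, iff_false, not_and]
        rintro hz ⟨y, hy, hCy⟩
        rw [List.length_eq_zero_iff] at hz
        subst hz
        rw [List.prefix_nil] at hy
        subst hy
        simp at hCy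
        exact h hCy
      have hx0 := hm.1 x
      rw [hempty]
      simp
      positivity
  | succ n ih =>
    intro x
    by_cases h : C ≤ m x
    · have hsub : {z : List Bool | z.length = n + 1 ∧ ∃ y, y <+: z ∧ C ≤ m (x ++ y)} ⊆
          {z : List Bool | z.length = n + 1} := fun z hz => hz.1
      have hle := Set.ncard_le_ncard hsub (len_finite (n + 1))
      have h1 : (({z : List Bool | z.length = n + 1 ∧ ∃ y, y <+: z ∧ C ≤ m (x ++ y)}).ncard : ℝ)
          ≤ 2 ^ (n + 1) := le_trans (by exact_mod_cast hle) (len_card_le (n + 1))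
      nlinarith [pow_pos (show (0:ℝ) < 2 by norm_num) (n + 1)]
    · set Sf := {z : List Bool | z.length = n ∧ ∃ y, y <+: z ∧ C ≤ m ((x ++ [false]) ++ y)} with hSfdef
      set St := {z : List Bool | z.length = n ∧ ∃ y, y <+: z ∧ C ≤ m ((x ++ [true]) ++ y)} with hStdef
      have hSf : Sf.Finite := (len_finite n).subset fun z hz => hz.1
      have hSt : St.Finite := (len_finite n).subset fun z hz => hz.1
      have hsub : {z : List Bool | z.length = n + 1 ∧ ∃ y, y <+: z ∧ C ≤ m (x ++ y)} ⊆
          (fun z => false :: z) '' Sf ∪ (fun z => true :: z) '' St := by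
        rintro z ⟨hz, y, hy, hCy⟩
        match z, hz with
        | b :: z', hz =>
          have hz' : z'.length = n := by simpa using hz
          match y with
          | [] =>
            simp at hCy
            exact absurd hCy h
          | b' :: y' =>
            rw [List.cons_prefix_cons] at hy
            obtain ⟨rfl, hy'⟩ := hy
            have hm' : C ≤ m ((x ++ [b']) ++ y') := by
              rwa [List.append_assoc, List.singleton_append]
            cases b'
            · exact Or.inl ⟨z', ⟨hz', y', hy', hm'⟩, rfl⟩
            · exact Or.inr ⟨z', ⟨hz', y', hy', hm'⟩, rfl⟩
      have h1 : ((fun z => false :: z) '' Sf).ncard = Sf.ncard :=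
        Set.ncard_image_of_injective _ (fun a b h => by simpa using h)
      have h2 : ((fun z => true :: z) '' St).ncard = St.ncard :=
        Set.ncard_image_of_injective _ (fun a b h => by simpa using h)
      have hle := Set.ncard_le_ncard hsub ((hSf.image _).union (hSt.image _))
      have hle2 := Set.ncard_union_le ((fun z => false :: z) '' Sf) ((fun z => true :: z) '' St)
      have hcast : (({z : List Bool | z.length = n + 1 ∧ ∃ y, y <+: z ∧ C ≤ m (x ++ y)}).ncard : ℝ)
          ≤ (Sf.ncard : ℝ) + (St.ncard : ℝ) := by
        have := le_trans hle hle2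
        rw [h1, h2] at this
        exact_mod_cast this
      have hf := ih (x ++ [false])
      have ht := ih (x ++ [true])
      have hmx := hm.2 x
      calc C * (({z : List Bool | z.length = n + 1 ∧ ∃ y, y <+: z ∧ C ≤ m (x ++ y)}).ncard : ℝ)
          ≤ C * ((Sf.ncard : ℝ) + (St.ncard : ℝ)) := by
            exact mul_le_mul_of_nonneg_left hcast hC.le
        _ = C * (Sf.ncard : ℝ) + C * (St.ncard : ℝ) := by ring
        _ ≤ 2 ^ n * m (x ++ [false]) + 2 ^ n * m (x ++ [true]) := add_le_add hf ht
        _ = 2 ^ (n + 1) * m x := by rw [hmx]; ring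

/-- **Finite Ville inequality.** For a martingale with initial capital `1`, the number of
strings of length `N` having a prefix on which the martingale reaches `C > 0` is at most
`2 ^ N / C`. -/
theorem finite_ville_inequality (m : List Bool → ℝ) (hm : IsMartingale m)
    (hm1 : m [] = 1) (N : ℕ) (C : ℝ) (hC : 0 < C) :
    (({x : List Bool | x.length = N ∧ ∃ y, y <+: x ∧ C ≤ m y}).ncard : ℝ) ≤
      2 ^ N / C := by
  have := key m hm C hC N []
  simp only [List.nil_append, hm1, mul_one] at this
  rw [le_div_iff₀ hC]
  linarith [this]
end

section
/- Combining countably many martingales: let (m_i) for i ∈ ℕ be martingales with m_i [] ≤ 1 for all i, and let (α_i) be positive reals with ∑ α_i = 1. Then the function m defined by m x = ∑_{i} α_i · m_i x is well defined (the series converges for every x ∈ List Bool), m is a martingale, and m wins against every sequence ω : ℕ → Bool against which at least one of the m_i wins. -/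
open Filter MeasureTheory Set
open scoped ENNReal

lemma mart_bound {f : List Bool → ℝ} (hf : IsMartingale f) :
    ∀ x : List Bool, f x ≤ 2 ^ x.length * f [] := by
  intro x
  induction x using List.reverseRecOn with
  | nil => simp
  | append_singleton x b ih =>
    have h1 := hf.2 x
    have h0f := hf.1 (x ++ [false])
    have h0t := hf.1 (x ++ [true])
    have hxb : f (x ++ [b]) ≤ 2 * f x := by
      cases b <;> nlinarith
    calc f (x ++ [b]) ≤ 2 * f x := hxb
      _ ≤ 2 * (2 ^ x.length * f []) := by
          have := hf.1 x
          nlinarith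
      _ = 2 ^ (x ++ [b]).length * f [] := by
          simp [pow_succ]; ring

/-- **Combining countably many martingales.** If `(m i)` are martingales with
`m i [] ≤ 1` and `(α i)` are positive reals summing to `1`, then `x ↦ ∑' i, α i * m i x`
is a well-defined martingale winning against every sequence against which some `m i`
wins. -/
theorem combine_martingales (m : ℕ → List Bool → ℝ) (hm : ∀ i, IsMartingale (m i))
    (hm1 : ∀ i, m i [] ≤ 1) (α : ℕ → ℝ) (hα : ∀ i, 0 < α i) (hsum : HasSum α 1) :
    (∀ x : List Bool, Summable fun i => α i * m i x) ∧
      IsMartingale (fun x => ∑' i, α i * m i x) ∧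
      ∀ ω : ℕ → Bool, (∃ i, Wins (m i) ω) →
        Wins (fun x => ∑' i, α i * m i x) ω := by
  have hsummα : Summable α := hsum.summable
  have hαnn : ∀ i, 0 ≤ α i := fun i => (hα i).le
  have hS : ∀ x : List Bool, Summable fun i => α i * m i x := by
    intro x
    apply Summable.of_nonneg_of_le
      (fun i => mul_nonneg (hαnn i) ((hm i).1 x))
      (fun i => ?_) (hsummα.mul_right ((2:ℝ) ^ x.length))
    have := mart_bound (hm i) x
    have h1 := hm1 i
    have : m i x ≤ 2 ^ x.length := by
      calc m i x ≤ 2 ^ x.length * m i [] := mart_bound (hm i) x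
        _ ≤ 2 ^ x.length * 1 := by
            have : (0:ℝ) ≤ 2 ^ x.length := by positivity
            nlinarith
        _ = 2 ^ x.length := mul_one _
    exact mul_le_mul_of_nonneg_left this (hαnn i)
  refine ⟨hS, ⟨fun x => tsum_nonneg fun i => mul_nonneg (hαnn i) ((hm i).1 x), ?_⟩, ?_⟩
  · intro x
    have : (fun i => α i * m i x) = fun i =>
        (α i * m i (x ++ [false]) + α i * m i (x ++ [true])) / 2 := by
      funext i
      rw [(hm i).2 x]
      ring
    show (∑' i, α i * m i x) = _
    rw [this]
    rw [tsum_div_const, Summable.tsum_add (hS (x ++ [false])) (hS (x ++ [true]))]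
  · rintro ω ⟨i, hi⟩ C
    rcases hi (C / α i) with ⟨n, hn⟩
    refine ⟨n, ?_⟩
    have h1 : C < α i * m i (prefixFn ω n) := by
      rw [div_lt_iff₀ (hα i)] at hn
      linarith [mul_comm (α i) (m i (prefixFn ω n))]
    have h2 : α i * m i (prefixFn ω n) ≤ ∑' j, α j * m j (prefixFn ω n) :=
      Summable.le_tsum (hS _) i fun j _ => mul_nonneg (hαnn j) ((hm j).1 _)
    linarith
end
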